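/- arXiv:1406.6899 — 12 statements merged into one kernel-verified Lean document; each statement's English description precedes it below -/
import Mathlib

section
/- If G is a finite non-cyclic group all of whose proper subgroups are cyclic, and G is not a p-group, then G has a normal cyclic Sylow complement; more precisely, G is a semidirect product of a cyclic normal subgroup by a cyclic Sylow q-subgroup for some prime q. -/
theorem noncyclic_nonpgroup_all_proper_cyclic (G : Type*) [Group G] [Finite G]
    (h1 : ¬ IsCyclic G)
    (h2 : ¬ ∃ p : ℕ, p.Prime ∧ IsPGroup p G)
    (h3 : ∀ H : Subgroup G, H ≠ ⊤ → IsCyclic H) :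
    ∃ (q : ℕ) (_ : Fact q.Prime) (N : Subgroup G) (S : Sylow q G),
      N.Normal ∧ IsCyclic N ∧ IsCyclic (S : Subgroup G) ∧
      N ⊓ (S : Subgroup G) = ⊥ ∧ N ⊔ (S : Subgroup G) = ⊤ := by
  classical
  -- the group is nontrivial
  have hcard1 : Nat.card G ≠ 1 := by
    intro h
    have : Subsingleton G := Nat.card_eq_one_iff_unique.mp h |>.1
    exact h1 (isCyclic_of_subsingleton)
  set p : ℕ := (Nat.card G).minFac with hp_def
  have hp : p.Prime := Nat.minFac_prime hcard1
  haveI hfp : Fact p.Prime := ⟨hp⟩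
  have hpdvd : p ∣ Nat.card G := Nat.minFac_dvd _
  obtain ⟨P⟩ : Nonempty (Sylow p G) := inferInstance
  -- P is a proper subgroup
  have hPtop : (P : Subgroup G) ≠ ⊤ := by
    intro h
    refine h2 ⟨p, hp, ?_⟩
    have := P.2
    rw [h] at this
    exact (IsPGroup.iff_card.mpr (by
      obtain ⟨n, hn⟩ := (IsPGroup.iff_card.mp this)
      exact ⟨n, by rwa [Nat.card_congr Subgroup.topEquiv.toEquiv] at hn⟩))
  have hPcyc : IsCyclic (P : Subgroup G) := h3 _ hPtop
  haveI : IsMulCommutative (P : Subgroup G) :=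
    ⟨⟨fun a b => (IsCyclic.commGroup (α := (P : Subgroup G))).mul_comm a b⟩⟩
  -- N(P) ≤ C(P)
  have hNC : (Subgroup.normalizer ((P : Subgroup G) : Set G)) ≤ Subgroup.centralizer (P : Set G) := by
    set f := (P : Subgroup G).normalizerMonoidHom
    have hker : f.ker = (Subgroup.centralizer ((P : Subgroup G) : Set G)).subgroupOf
        (Subgroup.normalizer ((P : Subgroup G) : Set G)) := Subgroup.normalizerMonoidHom_ker _
    -- card of the range divides p - 1
    obtain ⟨n, hn⟩ := P.2.exists_card_eq
    have hn0 : n ≠ 0 := by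
      rintro rfl
      rw [pow_zero] at hn
      have : p ∣ Nat.card (P : Subgroup G) := by
        rw [Sylow.card_eq_multiplicity]
        exact dvd_pow_self p (Nat.Prime.factorization_pos_of_dvd hp
          (Nat.card_pos (α := G)).ne' hpdvd).ne'
      rw [hn] at this
      exact hp.one_lt.ne' (Nat.eq_one_of_dvd_one this)
    have hAut : Nat.card (MulAut (P : Subgroup G)) = p ^ (n - 1) * (p - 1) := by
      rw [IsCyclic.card_mulAut, hn, Nat.totient_prime_pow hp (Nat.pos_of_ne_zero hn0)]
    have hrange_dvd_aut : Nat.card f.range ∣ p ^ (n - 1) * (p - 1) := by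
      rw [← hAut]
      exact Subgroup.card_subgroup_dvd_card f.range
    -- card range is coprime to p
    have hP_le_ker : (P : Subgroup G).subgroupOf (Subgroup.normalizer ((P : Subgroup G) : Set G)) ≤ f.ker := by
      rw [hker]
      intro x hx
      exact Subgroup.le_centralizer (P : Subgroup G) hx
    have hcard_range : Nat.card f.range = f.ker.index := by
      rw [← Subgroup.index_ker]
    have hnotp : ¬ p ∣ Nat.card f.range := by
      rw [hcard_range]
      intro hdvd
      have h1' : f.ker.index ∣ ((P : Subgroup G).subgroupOf
          (Subgroup.normalizer ((P : Subgroup G) : Set G))).index :=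
        Subgroup.index_dvd_of_le hP_le_ker
      have h2' : ((P : Subgroup G).subgroupOf (Subgroup.normalizer ((P : Subgroup G) : Set G))).index
          ∣ (P : Subgroup G).index :=
        Subgroup.relIndex_dvd_index_of_le Subgroup.le_normalizer
      exact P.not_dvd_index (hdvd.trans (h1'.trans h2'))
    have hdvd_p1 : Nat.card f.range ∣ p - 1 := by
      refine (Nat.Coprime.dvd_of_dvd_mul_left ?_ hrange_dvd_aut)
      exact Nat.Coprime.pow_right _ ((hp.coprime_iff_not_dvd.mpr hnotp).symm)
    -- card range divides card G
    have hdvd_G : Nat.card f.range ∣ Nat.card G := by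
      rw [hcard_range]
      exact (Subgroup.index_dvd_card _).trans
        (Subgroup.card_subgroup_dvd_card (Subgroup.normalizer ((P : Subgroup G) : Set G)))
    -- hence card range = 1
    have hone : Nat.card f.range = 1 := by
      by_contra hne
      have hpos : Nat.card f.range ≠ 0 := Nat.card_pos.ne'
      set r := (Nat.card f.range).minFac
      have hr : r.Prime := Nat.minFac_prime hne
      have hrG : r ∣ Nat.card G := (Nat.minFac_dvd _).trans hdvd_G
      have hpr : p ≤ r := Nat.minFac_le_of_dvd hr.two_le hrG
      have hrp1 : r ∣ p - 1 := (Nat.minFac_dvd _).trans hdvd_p1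
      have : r ≤ p - 1 := Nat.le_of_dvd (by have := hp.two_le; omega) hrp1
      have := hp.two_le
      omega
    -- conclude
    intro x hx
    have hbot : f.range = ⊥ := Subgroup.card_eq_one.mp hone
    have hmem : (⟨x, hx⟩ : (Subgroup.normalizer ((P : Subgroup G) : Set G))) ∈ f.ker := by
      rw [MonoidHom.mem_ker]
      have hr : f ⟨x, hx⟩ ∈ f.range := ⟨_, rfl⟩
      rwa [hbot, Subgroup.mem_bot] at hr
    rw [hker, Subgroup.mem_subgroupOf] at hmem
    exact hmem
  -- Burnside's normal p-complement theorem
  have hcompl := MonoidHom.ker_transferSylow_isComplement' P hNC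
  set K := (MonoidHom.transferSylow P hNC).ker with hK
  have hKnormal : K.Normal := MonoidHom.normal_ker _
  have hKtop : K ≠ ⊤ := by
    intro h
    have hidx : K.index = Nat.card (P : Subgroup G) := hcompl.symm.index_eq_card
    rw [h, Subgroup.index_top] at hidx
    have : p ∣ Nat.card (P : Subgroup G) := by
      rw [Sylow.card_eq_multiplicity]
      exact dvd_pow_self p (Nat.Prime.factorization_pos_of_dvd hp
        (Nat.card_pos (α := G)).ne' hpdvd).ne'
    rw [← hidx] at this
    exact hp.one_lt.ne' (Nat.eq_one_of_dvd_one this)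
  exact ⟨p, hfp, K, P, hKnormal, h3 _ hKtop, hPcyc,
    disjoint_iff.mp hcompl.disjoint,
    hcompl.sup_eq_top⟩
end

section
/- If G_1, ..., G_k are finite groups of pairwise coprime orders, then cdeg(G_1 × ⋯ × G_k) = ∏_{i=1}^k cdeg(G_i). -/
noncomputable def cdeg (G : Type*) [Group G] : ℚ :=
  (Nat.card {H : Subgroup G // IsCyclic H} : ℚ) / (Nat.card (Subgroup G) : ℚ)

section Aux

variable {ι : Type*} [Fintype ι]

/-- A product of pairwise-coprime divisors divides. -/
lemma aux_prod_dvd {f : ι → ℕ} {n : ℕ} (s : Finset ι)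
    (hc : ∀ i ∈ s, ∀ j ∈ s, i ≠ j → Nat.Coprime (f i) (f j))
    (hd : ∀ i ∈ s, f i ∣ n) : (∏ i ∈ s, f i) ∣ n := by
  classical
  induction s using Finset.induction with
  | empty => simp
  | @insert a s ha ih =>
    rw [Finset.prod_insert ha]
    have hcop : (f a).Coprime (∏ i ∈ s, f i) :=
      Nat.Coprime.prod_right fun j hj =>
        hc a (Finset.mem_insert_self a s) j (Finset.mem_insert_of_mem hj)
          (by rintro rfl; exact ha hj)
    exact hcop.mul_dvd_of_dvd_of_dvd (hd a (Finset.mem_insert_self a s))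
      (ih (fun i hi j hj hij => hc i (Finset.mem_insert_of_mem hi) j
        (Finset.mem_insert_of_mem hj) hij)
        (fun i hi => hd i (Finset.mem_insert_of_mem hi)))

/-- A finite product of cyclic groups of pairwise coprime orders is cyclic. -/
lemma aux_isCyclic_pi (K : ι → Type*) [∀ i, Group (K i)] [∀ i, Finite (K i)]
    (hc : ∀ i j, i ≠ j → Nat.Coprime (Nat.card (K i)) (Nat.card (K j)))
    (hcyc : ∀ i, IsCyclic (K i)) : IsCyclic (∀ i, K i) := by
  choose g hg using fun i => (hcyc i).exists_ofOrder_eq_natCard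
  apply isCyclic_of_orderOf_eq_card (fun i => g i)
  have hdvd : ∀ i, orderOf (g i) ∣ orderOf (fun i => g i) := by
    intro i
    rw [orderOf_dvd_iff_pow_eq_one]
    have := pow_orderOf_eq_one (fun i => g i)
    exact congrFun this i
  have h1 : (∏ i, Nat.card (K i)) ∣ orderOf (fun i => g i) := by
    apply aux_prod_dvd Finset.univ
    · intro i _ j _ hij; exact hc i j hij
    · intro i _; rw [← hg i]; exact hdvd i
  have h2 : orderOf (fun i => g i) ∣ Nat.card (∀ i, K i) := orderOf_dvd_natCard _
  rw [Nat.card_pi] at h2 ⊢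
  exact Nat.dvd_antisymm h2 h1

variable (G : ι → Type*) [∀ i, Group (G i)] [∀ i, Finite (G i)]

/-- the subgroup `Subgroup.pi Set.univ K` is isomorphic to the product of the `K i`. -/
def auxPiMulEquiv (K : ∀ i, Subgroup (G i)) :
    (Subgroup.pi Set.univ K : Subgroup (∀ i, G i)) ≃* ∀ i, K i where
  toFun x i := ⟨x.1 i, x.2 i (Set.mem_univ i)⟩
  invFun y := ⟨fun i => (y i).1, fun i _ => (y i).2⟩
  left_inv x := rfl
  right_inv y := rfl
  map_mul' x y := rfl

variable (h : ∀ i j, i ≠ j → Nat.Coprime (Nat.card (G i)) (Nat.card (G j)))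
include h

lemma aux_mulSingle_mem [DecidableEq ι] {H : Subgroup (∀ i, G i)} {y : ∀ i, G i}
    (hy : y ∈ H) (i : ι) : Pi.mulSingle i (y i) ∈ H := by
  set n : ℕ := ∏ j ∈ Finset.univ.erase i, Nat.card (G j) with hn
  have hcop : (Nat.card (G i)).Coprime n :=
    Nat.Coprime.prod_right fun j hj => h i j (Finset.ne_of_mem_erase hj).symm
  -- y ^ n is mulSingle i ((y i) ^ n)
  have hyn : y ^ n = Pi.mulSingle i ((y i) ^ n) := by
    funext j
    by_cases hji : j = i
    · subst hji; simp [Pi.pow_apply]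
    · have h1 : Nat.card (G j) ∣ n :=
        Finset.dvd_prod_of_mem _ (Finset.mem_erase.2 ⟨hji, Finset.mem_univ j⟩)
      have h2 : orderOf (y j) ∣ n := (orderOf_dvd_natCard (y j)).trans h1
      have : (y j) ^ n = 1 := orderOf_dvd_iff_pow_eq_one.mp h2
      simp [Pi.pow_apply, this, Pi.mulSingle_eq_of_ne hji]
  -- recover y i from (y i) ^ n
  have hrec : ((y i) ^ n) ^ ((Nat.card (G i)).gcdB n) = y i := by
    have := (powCoprime hcop).symm_apply_apply (y i)
    simpa [powCoprime] using this
  have key : (y ^ n) ^ ((Nat.card (G i)).gcdB n) = Pi.mulSingle i (y i) := by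
    rw [hyn]
    funext j
    by_cases hji : j = i
    · subst hji; simp [Pi.pow_apply, hrec]
    · simp [Pi.pow_apply, Pi.mulSingle_eq_of_ne hji]
  rw [← key]
  exact Subgroup.zpow_mem H (pow_mem hy n) _

lemma aux_eq_pi (H : Subgroup (∀ i, G i)) :
    H = Subgroup.pi Set.univ (fun i => H.map (Pi.evalMonoidHom G i)) := by
  classical
  apply le_antisymm
  · intro x hx i _
    exact ⟨x, hx, rfl⟩
  · intro x hx
    have hx' : ∀ i, x i ∈ H.map (Pi.evalMonoidHom G i) := fun i => hx i (Set.mem_univ i)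
    have : ∀ i, Pi.mulSingle i (x i) ∈ H := by
      intro i
      obtain ⟨y, hy, hyi⟩ := hx' i
      rw [← hyi]
      exact aux_mulSingle_mem G h hy i
    rw [← Finset.noncommProd_mulSingle x]
    exact Subgroup.noncommProd_mem H _ fun i _ => this i

lemma aux_map_pi (K : ∀ i, Subgroup (G i)) (i : ι) :
    (Subgroup.pi Set.univ K).map (Pi.evalMonoidHom G i) = K i := by
  classical
  apply le_antisymm
  · rintro _ ⟨y, hy, rfl⟩
    exact hy i (Set.mem_univ i)
  · intro k hk
    refine ⟨Pi.mulSingle i k, fun j _ => ?_, by simp [Pi.evalMonoidHom]⟩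
    by_cases hji : j = i
    · subst hji; simpa using hk
    · rw [Pi.mulSingle_eq_of_ne hji]; exact one_mem (K j)

/-- The subgroup lattice of a product of coprime-order groups decomposes. -/
noncomputable def auxSubgroupEquiv : Subgroup (∀ i, G i) ≃ ∀ i, Subgroup (G i) where
  toFun H i := H.map (Pi.evalMonoidHom G i)
  invFun K := Subgroup.pi Set.univ K
  left_inv H := (aux_eq_pi G h H).symm
  right_inv K := funext fun i => aux_map_pi G h K i

lemma aux_cyclic_iff (H : Subgroup (∀ i, G i)) :
    IsCyclic H ↔ ∀ i, IsCyclic (H.map (Pi.evalMonoidHom G i)) := by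
  constructor
  · intro hH i
    exact isCyclic_of_surjective _ ((Pi.evalMonoidHom G i).subgroupMap_surjective H)
  · intro hK
    rw [aux_eq_pi G h H]
    set K := fun i => H.map (Pi.evalMonoidHom G i)
    have hcop : ∀ i j, i ≠ j → Nat.Coprime (Nat.card (K i)) (Nat.card (K j)) := by
      intro i j hij
      exact Nat.Coprime.coprime_dvd_left (Subgroup.card_subgroup_dvd_card (K i))
        (Nat.Coprime.coprime_dvd_right (Subgroup.card_subgroup_dvd_card (K j)) (h i j hij))
    have : IsCyclic (∀ i, K i) := aux_isCyclic_pi (fun i => K i) hcop hK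
    exact isCyclic_of_surjective ((auxPiMulEquiv G K).symm).toMonoidHom
      (auxPiMulEquiv G K).symm.surjective

end Aux

theorem cdeg_pi_of_coprime {ι : Type*} [Fintype ι] (G : ι → Type*)
    [∀ i, Group (G i)] [∀ i, Finite (G i)]
    (h : ∀ i j, i ≠ j → Nat.Coprime (Nat.card (G i)) (Nat.card (G j))) :
    cdeg (∀ i, G i) = ∏ i, cdeg (G i) := by
  have hcard : Nat.card (Subgroup (∀ i, G i)) = ∏ i, Nat.card (Subgroup (G i)) := by
    rw [Nat.card_congr (auxSubgroupEquiv G h), Nat.card_pi]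
  have hcyc : Nat.card {H : Subgroup (∀ i, G i) // IsCyclic H}
      = ∏ i, Nat.card {H : Subgroup (G i) // IsCyclic H} := by
    have e1 : {H : Subgroup (∀ i, G i) // IsCyclic H}
        ≃ {K : ∀ i, Subgroup (G i) // ∀ i, IsCyclic (K i)} :=
      (auxSubgroupEquiv G h).subtypeEquiv fun H => aux_cyclic_iff G h H
    have e2 : {K : ∀ i, Subgroup (G i) // ∀ i, IsCyclic (K i)}
        ≃ ∀ i, {H : Subgroup (G i) // IsCyclic H} := Equiv.subtypePiEquivPi
        (p := fun i (H : Subgroup (G i)) => IsCyclic H)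
    rw [Nat.card_congr (e1.trans e2), Nat.card_pi]
  unfold cdeg
  rw [hcard, hcyc, Nat.cast_prod, Nat.cast_prod, ← Finset.prod_div_distrib]
end

section
/- For every prime p, cdeg((Z_p)^3) = 1/2. -/
open Module Submodule

section Aux

variable (p : ℕ) [Fact p.Prime]

local notation "Vp" => (Fin 3 → ZMod p)

/-- Cyclicity of an add subgroup of a vector space over `ZMod p` is equivalent to the
corresponding submodule having rank at most one. -/
lemma isAddCyclic_iff_finrank_le_one (H : AddSubgroup Vp) :
    IsAddCyclic H ↔ finrank (ZMod p) (AddSubgroup.toZModSubmodule p H) ≤ 1 := by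
  set W : Submodule (ZMod p) Vp := AddSubgroup.toZModSubmodule p H with hW
  have hcarrier : (W : Set Vp) = (H : Set Vp) := rfl
  constructor
  · rintro ⟨g, hg⟩
    -- g : H, every element of H is a zsmul of g
    have hle : W ≤ span (ZMod p) {((g : H) : Vp)} := by
      intro x hx
      obtain ⟨n, hn⟩ := hg ⟨x, hx⟩
      have : (n : ℤ) • ((g : H) : Vp) = x := by
        have := congrArg (Subtype.val) hn
        simpa using this
      rw [← this, ← Int.cast_smul_eq_zsmul (ZMod p)]
      exact smul_mem _ _ (mem_span_singleton_self _)
    calc finrank (ZMod p) W ≤ finrank (ZMod p) (span (ZMod p) {((g : H) : Vp)}) :=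
          Submodule.finrank_mono hle
      _ ≤ 1 := by
          refine (finrank_span_le_card _).trans ?_
          simp
  · intro h
    obtain ⟨v, hv⟩ := finrank_le_one_iff.mp h
    refine ⟨⟨(v : Vp), v.2⟩, fun w => ?_⟩
    obtain ⟨c, hc⟩ := hv ⟨(w : H), w.2⟩
    refine ⟨(c.val : ℤ), ?_⟩
    apply Subtype.ext
    have := congrArg (Subtype.val) hc
    have hcv : ((c.val : ℤ) : ZMod p) = c := by
      push_cast
      simp [ZMod.natCast_val, ZMod.cast_id]
    calc ((c.val : ℤ) • (⟨(v : Vp), v.2⟩ : H) : H).val = (c.val : ℤ) • (v : Vp) := rfl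
      _ = (((c.val : ℤ) : ZMod p)) • (v : Vp) := (Int.cast_smul_eq_zsmul (ZMod p) _ _).symm
      _ = c • (v : Vp) := by rw [hcv]
      _ = (w : Vp) := by simpa using this

/-- The duality bijection on submodules of `(ZMod p)^3`. -/
noncomputable def dualitySub : Submodule (ZMod p) Vp ≃ Submodule (ZMod p) Vp :=
  (((Subspace.orderIsoFiniteDimensional (K := ZMod p) (V := Fin 3 → ZMod p))).toEquiv.trans
    (OrderDual.ofDual : _ ≃ _)).trans
    (Submodule.orderIsoMapComap ((Pi.basisFun (ZMod p) (Fin 3)).toDualEquiv.symm)).toEquiv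

lemma finrank_dualitySub (W : Submodule (ZMod p) Vp) :
    finrank (ZMod p) (dualitySub p W) = 3 - finrank (ZMod p) W := by
  have h1 : finrank (ZMod p) (dualitySub p W) = finrank (ZMod p) W.dualAnnihilator := by
    exact LinearEquiv.finrank_map_eq _ _
  rw [h1]
  have h2 : finrank (ZMod p) ((Fin 3 → ZMod p) ⧸ W) = finrank (ZMod p) W.dualAnnihilator :=
    (Subspace.quotEquivAnnihilator W).finrank_eq
  have h3 := Submodule.finrank_quotient_add_finrank W
  have h4 : finrank (ZMod p) Vp = 3 := by
    simp [Module.finrank_fin_fun]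
  omega

lemma finrank_le_three (W : Submodule (ZMod p) Vp) : finrank (ZMod p) W ≤ 3 := by
  have h4 : finrank (ZMod p) Vp = 3 := by simp [Module.finrank_fin_fun]
  have := W.finrank_le
  omega

/-- Duality swaps cyclic and non-cyclic subgroups. -/
noncomputable def cyclicEquivNoncyclic :
    {H : AddSubgroup Vp // IsAddCyclic H} ≃ {H : AddSubgroup Vp // ¬ IsAddCyclic H} := by
  refine Equiv.subtypeEquiv
    ((AddSubgroup.toZModSubmodule p).toEquiv.trans
      ((dualitySub p).trans (AddSubgroup.toZModSubmodule p).toEquiv.symm)) (fun H => ?_)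
  rw [isAddCyclic_iff_finrank_le_one, isAddCyclic_iff_finrank_le_one]
  simp only [Equiv.trans_apply, OrderIso.toEquiv_symm, RelIso.coe_fn_toEquiv]
  erw [OrderIso.apply_symm_apply]
  rw [finrank_dualitySub]
  have := finrank_le_three p (AddSubgroup.toZModSubmodule p H)
  omega

end Aux

noncomputable def acdeg (G : Type*) [AddGroup G] : ℚ :=
  (Nat.card {H : AddSubgroup G // IsAddCyclic H} : ℚ) / (Nat.card (AddSubgroup G) : ℚ)

theorem cdeg_elementary_abelian_rank_three (p : ℕ) (hp : p.Prime) :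
    acdeg (Fin 3 → ZMod p) = 1 / 2 := by
  haveI : Fact p.Prime := ⟨hp⟩
  classical
  set Vp := (Fin 3 → ZMod p)
  have hc : Nat.card {H : AddSubgroup Vp // IsAddCyclic H}
      = Nat.card {H : AddSubgroup Vp // ¬ IsAddCyclic H} :=
    Nat.card_congr (cyclicEquivNoncyclic p)
  have htot : Nat.card (AddSubgroup Vp)
      = Nat.card {H : AddSubgroup Vp // IsAddCyclic H}
        + Nat.card {H : AddSubgroup Vp // ¬ IsAddCyclic H} := by
    rw [← Nat.card_sum]
    exact Nat.card_congr (Equiv.sumCompl _).symm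
  have hpos : 0 < Nat.card {H : AddSubgroup Vp // IsAddCyclic H} := by
    have : Finite (AddSubgroup Vp) :=
      Finite.of_injective (fun H => (H : Set Vp)) SetLike.coe_injective
    have : Finite {H : AddSubgroup Vp // IsAddCyclic H} := Subtype.finite
    have hne : Nonempty {H : AddSubgroup Vp // IsAddCyclic H} :=
      ⟨⟨⊥, inferInstance⟩⟩
    exact Nat.card_pos
  rw [acdeg, htot, ← hc]
  set c := Nat.card {H : AddSubgroup Vp // IsAddCyclic H}
  rw [show c + c = 2 * c by ring]
  push_cast
  rw [div_eq_div_iff (by positivity) (by norm_num)]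
  ring
end

section
/- For every prime p, cdeg((Z_p)^4) = (p^3+p^2+p+2)/(p^4+3p^3+4p^2+3p+5), and consequently cdeg((Z_p)^4) tends to 0 as p → ∞. -/
open Module

section Counting

variable {K V : Type*} [Field K] [Fintype K] [AddCommGroup V] [Module K V] [Finite V]

local notation "q" => Fintype.card K

instance : Finite (Submodule K V) :=
  Finite.of_injective (fun W : Submodule K V => (W : Set V)) SetLike.coe_injective

lemma aux_card_sigma_const {ι : Type*} [Finite ι] {f : ι → Type*} [∀ i, Finite (f i)] {c : ℕ}
    (h : ∀ i, Nat.card (f i) = c) : Nat.card (Σ i, f i) = Nat.card ι * c := by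
  cases nonempty_fintype ι
  have := fun i => Fintype.ofFinite (f i)
  simp only [Nat.card_eq_fintype_card] at h ⊢
  rw [Fintype.card_sigma]
  simp [h, Finset.sum_const, mul_comm]

lemma aux_card_sigma_fin {m : ℕ} {f : Fin m → Type*} [∀ i, Finite (f i)] :
    Nat.card (Σ i, f i) = ∑ i, Nat.card (f i) := by
  have := fun i => Fintype.ofFinite (f i)
  simp [Nat.card_eq_fintype_card]

lemma card_fiber {k : ℕ} (W : Submodule K V) (hW : finrank K W = k) :
    Nat.card {t : {s : Fin k → V // LinearIndependent K s} //
        Submodule.span K (Set.range t.1) = W}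
      = ∏ i : Fin k, (q ^ k - q ^ (i : ℕ)) := by
  have e : {t : {s : Fin k → V // LinearIndependent K s} //
        Submodule.span K (Set.range t.1) = W}
      ≃ {s : Fin k → W // LinearIndependent K s} :=
    { toFun := fun t => ⟨fun i => ⟨t.1.1 i,
        t.2.le (Submodule.subset_span (Set.mem_range_self i))⟩,
        LinearIndependent.of_comp W.subtype t.1.2⟩
      invFun := fun s => ⟨⟨W.subtype ∘ s.1, s.2.map' W.subtype (Submodule.ker_subtype W)⟩, by
        have htop : Submodule.span K (Set.range s.1) = ⊤ :=
          Submodule.eq_top_of_finrank_eq (by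
            rw [finrank_span_eq_card s.2, Fintype.card_fin, hW])
        rw [Set.range_comp, ← Submodule.map_span, htop,
          Submodule.map_top, Submodule.range_subtype]⟩
      left_inv := fun t => rfl
      right_inv := fun s => rfl }
  rw [Nat.card_congr e, card_linearIndependent (le_of_eq hW.symm), hW]

lemma card_submodule_mul (k : ℕ) (hk : k ≤ finrank K V) :
    Nat.card {W : Submodule K V // finrank K W = k} * ∏ i : Fin k, (q ^ k - q ^ (i : ℕ))
      = ∏ i : Fin k, (q ^ finrank K V - q ^ (i : ℕ)) := by
  classical
  rw [← card_linearIndependent hk]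
  set f : {s : Fin k → V // LinearIndependent K s} → {W : Submodule K V // finrank K W = k} :=
    fun s => ⟨Submodule.span K (Set.range s.1), by
      rw [finrank_span_eq_card s.2, Fintype.card_fin]⟩ with hf
  have hfib : ∀ W : {W : Submodule K V // finrank K W = k},
      Nat.card {t : {s : Fin k → V // LinearIndependent K s} // f t = W}
        = ∏ i : Fin k, (q ^ k - q ^ (i : ℕ)) := by
    intro W
    have e2 : {t : {s : Fin k → V // LinearIndependent K s} // f t = W}
        ≃ {t : {s : Fin k → V // LinearIndependent K s} //
            Submodule.span K (Set.range t.1) = W.1} :=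
      Equiv.subtypeEquivRight fun t => Subtype.ext_iff
    rw [Nat.card_congr e2, card_fiber W.1 W.2]
  rw [Nat.card_congr (Equiv.sigmaFiberEquiv f).symm, aux_card_sigma_const hfib]

lemma card_submodules_eq_sum :
    Nat.card (Submodule K V)
      = ∑ j : Fin (finrank K V + 1), Nat.card {W : Submodule K V // finrank K W = (j : ℕ)} := by
  classical
  set f : Submodule K V → Fin (finrank K V + 1) :=
    fun W => ⟨finrank K W, Nat.lt_succ_of_le (Submodule.finrank_le W)⟩ with hf
  rw [Nat.card_congr (Equiv.sigmaFiberEquiv f).symm, aux_card_sigma_fin]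
  refine Finset.sum_congr rfl fun j _ => ?_
  exact Nat.card_congr (Equiv.subtypeEquivRight fun W => by simp [hf, Fin.ext_iff])

end Counting

section Main

variable (p : ℕ) [Fact p.Prime]

abbrev Gp := Fin 4 → ZMod p

lemma smul_p (v : Gp p) : p • v = 0 := by
  funext i
  simp [nsmul_eq_mul, ZMod.natCast_self]

lemma card_addsubgroup (H : AddSubgroup (Gp p)) :
    Nat.card H = p ^ finrank (ZMod p) (AddSubgroup.toZModSubmodule p H) := by
  have : Nat.card H = Nat.card (AddSubgroup.toZModSubmodule p H) := rfl
  have : Fintype ((AddSubgroup.toZModSubmodule p) H) := Fintype.ofFinite _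
  rw [‹Nat.card H = _›, Nat.card_eq_fintype_card,
    card_eq_pow_finrank (K := ZMod p), ZMod.card]

lemma cyclic_iff_finrank_le (H : AddSubgroup (Gp p)) :
    IsAddCyclic H ↔ finrank (ZMod p) (AddSubgroup.toZModSubmodule p H) ≤ 1 := by
  have hp := (Fact.out : p.Prime)
  constructor
  · rintro ⟨g, hg⟩
    have h1 : addOrderOf g = Nat.card H := addOrderOf_eq_card_of_forall_mem_zmultiples hg
    have h2 : addOrderOf g ∣ p := by
      rw [addOrderOf_dvd_iff_nsmul_eq_zero]
      apply Subtype.ext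
      push_cast
      exact smul_p p _
    rw [h1, card_addsubgroup] at h2
    have h3 : p ^ finrank (ZMod p) (AddSubgroup.toZModSubmodule p H) ∣ p ^ 1 := by
      rwa [pow_one]
    exact (Nat.pow_dvd_pow_iff_le_right hp.one_lt).mp h3
  · intro hle
    apply isAddCyclic_of_card_dvd_prime (p := p)
    rw [card_addsubgroup]
    calc p ^ finrank (ZMod p) (AddSubgroup.toZModSubmodule p H) ∣ p ^ 1 :=
          pow_dvd_pow p hle
      _ = p := pow_one p

end Main

section Compute

variable (p : ℕ) [Fact p.Prime]

lemma finrank_Vp : finrank (ZMod p) (Fin 4 → ZMod p) = 4 := by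
  simp [Module.finrank_fintype_fun_eq_card]

lemma cast_prod_sub {k m : ℕ} (hk : k ≤ m) :
    ((∏ i : Fin k, (p ^ m - p ^ (i : ℕ)) : ℕ) : ℚ)
      = ∏ i : Fin k, ((p : ℚ) ^ m - (p : ℚ) ^ (i : ℕ)) := by
  rw [Nat.cast_prod]
  refine Finset.prod_congr rfl fun i _ => ?_
  have hp : 1 ≤ p := (Fact.out : p.Prime).one_lt.le
  rw [Nat.cast_sub (Nat.pow_le_pow_right hp (i.isLt.le.trans hk))]
  push_cast
  ring

lemma key (k : ℕ) (hk : k ≤ 4) :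
    (Nat.card {W : Submodule (ZMod p) (Fin 4 → ZMod p) // finrank (ZMod p) W = k} : ℚ)
        * ∏ i : Fin k, ((p : ℚ) ^ k - (p : ℚ) ^ (i : ℕ))
      = ∏ i : Fin k, ((p : ℚ) ^ 4 - (p : ℚ) ^ (i : ℕ)) := by
  have h := card_submodule_mul (K := ZMod p) (V := Fin 4 → ZMod p) k
    (by rw [finrank_Vp]; exact hk)
  rw [ZMod.card, finrank_Vp] at h
  have h2 := congrArg (Nat.cast (R := ℚ)) h
  rwa [Nat.cast_mul, cast_prod_sub p le_rfl, cast_prod_sub p hk] at h2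

end Compute


section Values

variable (p : ℕ) [Fact p.Prime]

lemma hp2Q : (2 : ℚ) ≤ (p : ℚ) := by exact_mod_cast (Fact.out : p.Prime).two_le

lemma hltQ {a b : ℕ} (h : a < b) : (p : ℚ) ^ a < (p : ℚ) ^ b :=
  pow_lt_pow_right₀ (by linarith [hp2Q p]) h

lemma hlt1Q {b : ℕ} (h : 0 < b) : (1 : ℚ) < (p : ℚ) ^ b := by
  simpa using hltQ p h

lemma c0val : (Nat.card {W : Submodule (ZMod p) (Fin 4 → ZMod p) //
    finrank (ZMod p) W = 0} : ℚ) = 1 := by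
  have h := key p 0 (by norm_num)
  simpa using h

lemma c1val : (Nat.card {W : Submodule (ZMod p) (Fin 4 → ZMod p) //
    finrank (ZMod p) W = 1} : ℚ) = (p:ℚ)^3 + (p:ℚ)^2 + (p:ℚ) + 1 := by
  have h := key p 1 (by norm_num)
  set c := (Nat.card {W : Submodule (ZMod p) (Fin 4 → ZMod p) //
    finrank (ZMod p) W = 1} : ℚ) with hc
  simp [Fin.prod_univ_succ] at h
  have hne : (p:ℚ) - 1 ≠ 0 := ne_of_gt (by linarith [hp2Q p])
  apply mul_right_cancel₀ hne
  linear_combination h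

lemma c2val : (Nat.card {W : Submodule (ZMod p) (Fin 4 → ZMod p) //
    finrank (ZMod p) W = 2} : ℚ) = (p:ℚ)^4 + (p:ℚ)^3 + 2*(p:ℚ)^2 + (p:ℚ) + 1 := by
  have h := key p 2 (by norm_num)
  set c := (Nat.card {W : Submodule (ZMod p) (Fin 4 → ZMod p) //
    finrank (ZMod p) W = 2} : ℚ) with hc
  simp [Fin.prod_univ_succ] at h
  have h1 : (0:ℚ) < (p:ℚ)^2 - 1 := sub_pos.2 (hlt1Q p (by norm_num))
  have h2 : (0:ℚ) < (p:ℚ)^2 - (p:ℚ) := sub_pos.2 (by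
    simpa using hltQ p (show 1 < 2 by norm_num))
  have hne : ((p:ℚ)^2 - 1) * ((p:ℚ)^2 - (p:ℚ)) ≠ 0 := by positivity
  apply mul_right_cancel₀ hne
  linear_combination h

lemma c3val : (Nat.card {W : Submodule (ZMod p) (Fin 4 → ZMod p) //
    finrank (ZMod p) W = 3} : ℚ) = (p:ℚ)^3 + (p:ℚ)^2 + (p:ℚ) + 1 := by
  have h := key p 3 (by norm_num)
  set c := (Nat.card {W : Submodule (ZMod p) (Fin 4 → ZMod p) //
    finrank (ZMod p) W = 3} : ℚ) with hc
  simp [Fin.prod_univ_succ] at h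
  have h1 : (0:ℚ) < (p:ℚ)^3 - 1 := sub_pos.2 (hlt1Q p (by norm_num))
  have h2 : (0:ℚ) < (p:ℚ)^3 - (p:ℚ) := sub_pos.2 (by
    simpa using hltQ p (show 1 < 3 by norm_num))
  have h3 : (0:ℚ) < (p:ℚ)^3 - (p:ℚ)^2 := sub_pos.2 (hltQ p (by norm_num))
  have hne : ((p:ℚ)^3 - 1) * (((p:ℚ)^3 - (p:ℚ)) * ((p:ℚ)^3 - (p:ℚ)^2)) ≠ 0 := by positivity
  apply mul_right_cancel₀ hne
  linear_combination h

lemma c4val : (Nat.card {W : Submodule (ZMod p) (Fin 4 → ZMod p) //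
    finrank (ZMod p) W = 4} : ℚ) = 1 := by
  have h := key p 4 (by norm_num)
  set c := (Nat.card {W : Submodule (ZMod p) (Fin 4 → ZMod p) //
    finrank (ZMod p) W = 4} : ℚ) with hc
  simp [Fin.prod_univ_succ] at h
  have h1 : (0:ℚ) < (p:ℚ)^4 - 1 := sub_pos.2 (hlt1Q p (by norm_num))
  have h2 : (0:ℚ) < (p:ℚ)^4 - (p:ℚ) := sub_pos.2 (by
    simpa using hltQ p (show 1 < 4 by norm_num))
  have h3 : (0:ℚ) < (p:ℚ)^4 - (p:ℚ)^2 := sub_pos.2 (hltQ p (by norm_num))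
  have h4 : (0:ℚ) < (p:ℚ)^4 - (p:ℚ)^3 := sub_pos.2 (hltQ p (by norm_num))
  have hne : ((p:ℚ)^4 - 1) * (((p:ℚ)^4 - (p:ℚ)) * (((p:ℚ)^4 - (p:ℚ)^2) * ((p:ℚ)^4 - (p:ℚ)^3)))
      ≠ 0 := by positivity
  apply mul_right_cancel₀ hne
  linear_combination h

end Values

section Assemble

variable (p : ℕ) [Fact p.Prime]

lemma card_submodules_eq_sum' {K V : Type*} [Field K] [Fintype K] [AddCommGroup V] [Module K V]
    [Finite V] (n : ℕ) (hn : finrank K V = n) :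
    Nat.card (Submodule K V)
      = ∑ j : Fin (n + 1), Nat.card {W : Submodule K V // finrank K W = (j : ℕ)} := by
  subst hn; exact card_submodules_eq_sum

lemma total_val : (Nat.card (Submodule (ZMod p) (Fin 4 → ZMod p)) : ℚ)
    = (p:ℚ)^4 + 3*(p:ℚ)^3 + 4*(p:ℚ)^2 + 3*(p:ℚ) + 5 := by
  have h := card_submodules_eq_sum' (K := ZMod p) (V := Fin 4 → ZMod p) 4 (finrank_Vp p)
  have h2 := congrArg (Nat.cast (R := ℚ)) h
  rw [Nat.cast_sum, Fin.sum_univ_five] at h2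
  norm_num [-Nat.card_eq_fintype_card] at h2
  rw [h2, c1val, c2val, c3val, c4val]
  ring

lemma cyclic_val : (Nat.card {H : AddSubgroup (Fin 4 → ZMod p) // IsAddCyclic H} : ℚ)
    = (p:ℚ)^3 + (p:ℚ)^2 + (p:ℚ) + 2 := by
  classical
  have e1 : {H : AddSubgroup (Fin 4 → ZMod p) // IsAddCyclic H}
      ≃ {W : Submodule (ZMod p) (Fin 4 → ZMod p) // finrank (ZMod p) W ≤ 1} :=
    Equiv.subtypeEquiv (AddSubgroup.toZModSubmodule p).toEquiv
      (fun H => cyclic_iff_finrank_le p H)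
  have e2 : {W : Submodule (ZMod p) (Fin 4 → ZMod p) // finrank (ZMod p) W ≤ 1}
      ≃ {W : Submodule (ZMod p) (Fin 4 → ZMod p) //
          finrank (ZMod p) W = 0 ∨ finrank (ZMod p) W = 1} :=
    Equiv.subtypeEquivRight fun W => Nat.le_one_iff_eq_zero_or_eq_one
  have hdisj : Disjoint
      (fun W : Submodule (ZMod p) (Fin 4 → ZMod p) => finrank (ZMod p) W = 0)
      (fun W : Submodule (ZMod p) (Fin 4 → ZMod p) => finrank (ZMod p) W = 1) := by
    rw [Pi.disjoint_iff]
    intro W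
    simp only [Prop.disjoint_iff]
    intro h0
    omega
  rw [Nat.card_congr (e1.trans (e2.trans (subtypeOrEquiv _ _ hdisj))), Nat.card_sum,
    Nat.cast_add, c0val, c1val]
  ring

end Assemble

theorem cdeg_elementary_abelian_rank_four :
    (∀ p : ℕ, p.Prime → acdeg (Fin 4 → ZMod p) =
      ((p : ℚ) ^ 3 + (p : ℚ) ^ 2 + (p : ℚ) + 2) /
        ((p : ℚ) ^ 4 + 3 * (p : ℚ) ^ 3 + 4 * (p : ℚ) ^ 2 + 3 * (p : ℚ) + 5)) ∧
    Filter.Tendsto (fun p : ℕ => acdeg (Fin 4 → ZMod p))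
      (Filter.atTop ⊓ Filter.principal {p | p.Prime}) (nhds 0) := by
  have main : ∀ p : ℕ, p.Prime → acdeg (Fin 4 → ZMod p) =
      ((p : ℚ) ^ 3 + (p : ℚ) ^ 2 + (p : ℚ) + 2) /
        ((p : ℚ) ^ 4 + 3 * (p : ℚ) ^ 3 + 4 * (p : ℚ) ^ 2 + 3 * (p : ℚ) + 5) := by
    intro p hp
    haveI : Fact p.Prime := ⟨hp⟩
    have hden : (Nat.card (AddSubgroup (Fin 4 → ZMod p)) : ℚ)
        = (p:ℚ)^4 + 3*(p:ℚ)^3 + 4*(p:ℚ)^2 + 3*(p:ℚ) + 5 := by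
      rw [show Nat.card (AddSubgroup (Fin 4 → ZMod p))
          = Nat.card (Submodule (ZMod p) (Fin 4 → ZMod p)) from
        Nat.card_congr (AddSubgroup.toZModSubmodule p).toEquiv]
      exact total_val p
    unfold acdeg
    rw [cyclic_val p, hden]
  refine ⟨main, ?_⟩
  rw [tendsto_order]
  constructor
  · intro a ha
    refine Filter.Eventually.of_forall fun p => lt_of_lt_of_le ha ?_
    unfold acdeg
    positivity
  · intro a ha
    obtain ⟨N, hN⟩ := exists_nat_gt (5 / a)
    rw [Filter.eventually_inf_principal]
    filter_upwards [Filter.eventually_ge_atTop (max N 2)] with p hp hprime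
    haveI : Fact p.Prime := ⟨hprime⟩
    rw [main p hprime]
    have hq := hp2Q p
    have hp0 : (0:ℚ) < (p:ℚ) := by linarith
    have hpN : (N:ℚ) ≤ (p:ℚ) := by
      exact_mod_cast le_trans (le_max_left _ _) hp
    have h5 : 5 / a < (p:ℚ) := lt_of_lt_of_le hN hpN
    have h5' : 5 < (p:ℚ) * a := by rwa [div_lt_iff₀ ha] at h5
    have hden : (0:ℚ) < (p:ℚ)^4 + 3*(p:ℚ)^3 + 4*(p:ℚ)^2 + 3*(p:ℚ) + 5 := by positivity
    rw [div_lt_iff₀ hden]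
    have hp3 : (0:ℚ) < (p:ℚ)^3 := by positivity
    have k1 : 5 * (p:ℚ)^3 < ((p:ℚ)*a) * (p:ℚ)^3 := by nlinarith
    have k2 : (p:ℚ)^3+(p:ℚ)^2+(p:ℚ)+2 ≤ 5*(p:ℚ)^3 := by nlinarith [sq_nonneg ((p:ℚ))]
    have k3 : ((p:ℚ)*a)*(p:ℚ)^3 ≤ a*((p:ℚ)^4+3*(p:ℚ)^3+4*(p:ℚ)^2+3*(p:ℚ)+5) := by
      nlinarith [mul_nonneg ha.le (show (0:ℚ) ≤ 3*(p:ℚ)^3+4*(p:ℚ)^2+3*(p:ℚ)+5 by positivity)]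
    linarith
end

section
/- The infimum of cdeg(G) over all finite groups G equals 0. -/
private instance zpowers_cyclic (G : Type*) [Group G] (g : G) : IsCyclic (Subgroup.zpowers g) :=
  ⟨⟨⟨g, Subgroup.mem_zpowers g⟩, fun x => by
    obtain ⟨k, hk⟩ := x.2
    exact ⟨k, Subtype.ext (by simpa using hk)⟩⟩⟩

private lemma cyclic_count_le (G : Type*) [Group G] [Finite G] :
    Nat.card {H : Subgroup G // IsCyclic H} ≤ Nat.card G := by
  apply Nat.card_le_card_of_surjective
    (f := fun g : G => (⟨Subgroup.zpowers g, inferInstance⟩ : {H : Subgroup G // IsCyclic H}))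
  rintro ⟨H, hH⟩
  obtain ⟨⟨g, hg⟩, hgen⟩ := hH.exists_generator
  refine ⟨g, Subtype.ext ?_⟩
  ext x
  constructor
  · rintro ⟨k, rfl⟩; exact H.zpow_mem hg k
  · intro hx
    obtain ⟨k, hk⟩ := hgen ⟨x, hx⟩
    exact ⟨k, congrArg Subtype.val hk⟩

private lemma den_lb (n : ℕ) :
    (2:ℕ)^(n*n) ≤ Nat.card (Subgroup (Multiplicative ((Fin n → ZMod 2) × (Fin n → ZMod 2)))) := by
  set V := Fin n → ZMod 2
  have hcard : Nat.card (V →ₗ[ZMod 2] V) = 2^(n*n) := by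
    rw [Nat.card_congr (LinearMap.toMatrix (Pi.basisFun (ZMod 2) (Fin n))
      (Pi.basisFun (ZMod 2) (Fin n))).toEquiv]
    simp [Nat.card_eq_fintype_card, Matrix, ← pow_mul]
  rw [← hcard]
  apply Nat.card_le_card_of_injective
    (f := fun f : V →ₗ[ZMod 2] V => AddSubgroup.toSubgroup f.graph.toAddSubgroup)
  intro f g hfg
  have hgr : f.graph = g.graph :=
    Submodule.toAddSubgroup_injective (AddSubgroup.toSubgroup.injective hfg)
  refine LinearMap.ext fun x => ?_
  have : (x, f x) ∈ g.graph := hgr ▸ ((f.mem_graph_iff (x, f x)).mpr rfl)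
  simpa using (g.mem_graph_iff _).mp this

private lemma cdeg_example_le (n : ℕ) :
    cdeg (Multiplicative ((Fin n → ZMod 2) × (Fin n → ZMod 2))) ≤ (2:ℚ)^(2*n) / 2^(n*n) := by
  set G := Multiplicative ((Fin n → ZMod 2) × (Fin n → ZMod 2))
  have hG : Nat.card G = 2^(2*n) := by
    simp [G, Nat.card_eq_fintype_card, two_mul, pow_add]
  have h1 : (Nat.card {H : Subgroup G // IsCyclic H} : ℚ) ≤ 2^(2*n) := by
    exact_mod_cast hG ▸ cyclic_count_le G
  have h2 : (2:ℚ)^(n*n) ≤ (Nat.card (Subgroup G) : ℚ) := by exact_mod_cast den_lb n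
  unfold cdeg
  apply div_le_div₀ (by positivity) h1 (by positivity) h2

theorem cdeg_inf_eq_zero :
    IsGLB {x : ℚ | ∃ (G : Type) (inst : Group G), Finite G ∧ @cdeg G inst = x} 0 := by
  constructor
  · rintro x ⟨G, inst, hfin, rfl⟩
    exact div_nonneg (by positivity) (by positivity)
  · intro b hb
    by_contra hb0
    push_neg at hb0
    obtain ⟨k, hk⟩ := exists_pow_lt_of_lt_one hb0 (by norm_num : (1:ℚ)/2 < 1)
    set n := k + 3 with hn
    have hmem : cdeg (Multiplicative ((Fin n → ZMod 2) × (Fin n → ZMod 2))) ∈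
        {x : ℚ | ∃ (G : Type) (inst : Group G), Finite G ∧ @cdeg G inst = x} :=
      ⟨_, _, inferInstance, rfl⟩
    have hle := hb hmem
    have key : cdeg (Multiplicative ((Fin n → ZMod 2) × (Fin n → ZMod 2))) < b := by
      calc cdeg (Multiplicative ((Fin n → ZMod 2) × (Fin n → ZMod 2)))
          ≤ (2:ℚ)^(2*n) / 2^(n*n) := cdeg_example_le n
        _ ≤ ((1:ℚ)/2)^n := by
            rw [div_pow, one_pow, div_le_div_iff₀ (by positivity) (by positivity), one_mul,
              ← pow_add]
            apply pow_le_pow_right₀ (by norm_num)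
            nlinarith [hn]
        _ ≤ ((1:ℚ)/2)^k := by
            apply pow_le_pow_of_le_one (by norm_num) (by norm_num)
            omega
        _ < b := hk
    exact absurd hle (not_le.mpr key)
end

section
/- For all positive integers m and n, the number of cyclic subgroups of Z_m × Z_n equals ∑_{a | m} ∑_{b | n} φ(gcd(a,b)). -/
open Finset AddSubgroup

open scoped Classical

section Aux

variable {G : Type*} [AddCommGroup G] [Fintype G]

omit [Fintype G] in
lemma aux_isAddCyclic_zmultiples (x : G) : IsAddCyclic (zmultiples x) := by
  refine ⟨⟨x, mem_zmultiples x⟩, fun y => ?_⟩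
  obtain ⟨k, hk⟩ := y.2
  exact ⟨k, Subtype.ext (by simpa using hk)⟩

omit [Fintype G] in
lemma aux_exists_zmultiples {H : AddSubgroup G} (h : IsAddCyclic H) :
    ∃ x : G, zmultiples x = H := by
  obtain ⟨g, hg⟩ := h.exists_generator
  refine ⟨(g : G), ?_⟩
  have h1 : zmultiples (g : G) = (zmultiples g).map H.subtype :=
    (AddMonoidHom.map_zmultiples H.subtype g).symm
  rw [h1, (AddSubgroup.eq_top_iff' _).mpr hg, ← AddMonoidHom.range_eq_map,
    AddSubgroup.range_subtype]

lemma aux_zmultiples_eq_iff (x y : G) :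
    zmultiples y = zmultiples x ↔ y ∈ zmultiples x ∧ addOrderOf y = addOrderOf x := by
  constructor
  · intro h
    refine ⟨h ▸ mem_zmultiples y, ?_⟩
    rw [← Nat.card_zmultiples y, ← Nat.card_zmultiples x, h]
  · rintro ⟨h1, h2⟩
    refine AddSubgroup.eq_of_le_of_card_ge (zmultiples_le.mpr h1) ?_
    rw [Nat.card_zmultiples y, Nat.card_zmultiples x, h2]

lemma aux_card_fiber (x : G) :
    (univ.filter fun y : G => zmultiples y = zmultiples x).card
      = (addOrderOf x).totient := by
  have e : {z : zmultiples x // addOrderOf z = addOrderOf x}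
      ≃ {y : G // zmultiples y = zmultiples x} :=
    { toFun := fun z => ⟨(z.1 : G), (aux_zmultiples_eq_iff x _).mpr
        ⟨z.1.2, by rw [AddSubgroup.addOrderOf_coe, z.2]⟩⟩
      invFun := fun y => ⟨⟨y.1, ((aux_zmultiples_eq_iff x _).mp y.2).1⟩, by
        simpa using ((aux_zmultiples_eq_iff x _).mp y.2).2⟩
      left_inv := fun z => by ext; rfl
      right_inv := fun y => rfl }
  have hdvd : addOrderOf x ∣ Fintype.card (zmultiples x) := by
    rw [← Nat.card_eq_fintype_card, Nat.card_zmultiples]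
  haveI : IsAddCyclic (zmultiples x) := aux_isAddCyclic_zmultiples x
  have h1 := IsAddCyclic.card_addOrderOf_eq_totient (α := zmultiples x) (d := addOrderOf x) hdvd
  have h2 : (univ.filter fun z : zmultiples x => addOrderOf z = addOrderOf x).card
      = (univ.filter fun y : G => zmultiples y = zmultiples x).card := by
    rw [← Fintype.card_subtype, ← Fintype.card_subtype]
    exact Fintype.card_congr e
  rw [← h2]
  convert h1 using 2

lemma aux_card_cyclic_eq_sum_inv :
    ((Nat.card {H : AddSubgroup G // IsAddCyclic H} : ℚ)) =
      ∑ x : G, ((addOrderOf x).totient : ℚ)⁻¹ := by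
  set s : Finset (AddSubgroup G) := univ.image (fun x : G => zmultiples x) with hs
  have h1 : Nat.card {H : AddSubgroup G // IsAddCyclic H} = s.card := by
    have heq : {H : AddSubgroup G // IsAddCyclic H} ≃ {H // H ∈ s} := by
      refine Equiv.subtypeEquivRight fun H => ?_
      simp only [hs, mem_image, mem_univ, true_and]
      constructor
      · intro h; exact aux_exists_zmultiples h
      · rintro ⟨x, rfl⟩; exact aux_isAddCyclic_zmultiples x
    rw [Nat.card_congr heq, Nat.card_eq_fintype_card, Fintype.card_coe]
  rw [h1]
  have h2 : ∑ x : G, ((addOrderOf x).totient : ℚ)⁻¹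
      = ∑ H ∈ s, ((univ.filter fun y : G => zmultiples y = H).card : ℚ)
          * ((Nat.card H).totient : ℚ)⁻¹ := by
    have h3 := Finset.sum_comp (fun H : AddSubgroup G => ((Nat.card H).totient : ℚ)⁻¹)
      (fun x : G => zmultiples x) (s := univ)
    simp only [Nat.card_zmultiples, nsmul_eq_mul] at h3 ⊢
    exact h3
  rw [h2]
  rw [Finset.sum_congr rfl (fun H hH => ?_), Finset.sum_const, nsmul_eq_mul, mul_one]
  obtain ⟨x, -, rfl⟩ := mem_image.mp hH
  rw [aux_card_fiber x, Nat.card_zmultiples]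
  have hpos : 0 < (addOrderOf x).totient :=
    Nat.totient_pos.mpr (addOrderOf_pos x)
  rw [mul_inv_cancel₀ (by exact_mod_cast hpos.ne')]

end Aux

lemma aux_totient_gcd_mul_totient_lcm (a b : ℕ) (ha : 0 < a) (hb : 0 < b) :
    (a.gcd b).totient * (a.lcm b).totient = a.totient * b.totient := by
  have h1 := Nat.totient_gcd_mul_totient_mul a b
  have h2 := Nat.totient_gcd_mul_totient_mul (a.gcd b) (a.lcm b)
  rw [Nat.gcd_eq_left ((Nat.gcd_dvd_left a b).trans (Nat.dvd_lcm_left a b)),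
    Nat.gcd_mul_lcm] at h2
  have hg : 0 < a.gcd b := Nat.gcd_pos_of_pos_left _ ha
  exact Nat.eq_of_mul_eq_mul_right hg (h2.symm.trans h1)

lemma aux_sum_zmod (n : ℕ) [NeZero n] (F : ℕ → ℚ) :
    ∑ x : ZMod n, F (addOrderOf x) = ∑ j ∈ n.divisors, (j.totient : ℚ) * F j := by
  have hn : n ≠ 0 := NeZero.ne n
  have hmaps : ∀ x ∈ (univ : Finset (ZMod n)), addOrderOf x ∈ n.divisors := by
    intro x _
    refine Nat.mem_divisors.mpr ⟨?_, hn⟩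
    have := addOrderOf_dvd_card (x := x)
    rwa [ZMod.card n] at this
  rw [← Finset.sum_fiberwise_of_maps_to hmaps (fun x : ZMod n => F (addOrderOf x))]
  refine Finset.sum_congr rfl fun j hj => ?_
  obtain ⟨hjd, -⟩ := Nat.mem_divisors.mp hj
  have hcard : (univ.filter fun x : ZMod n => addOrderOf x = j).card = j.totient := by
    have h := IsAddCyclic.card_addOrderOf_eq_totient (α := ZMod n) (d := j)
      (by rw [ZMod.card]; exact hjd)
    convert h using 2
  calc ∑ x ∈ univ.filter fun x : ZMod n => addOrderOf x = j, F (addOrderOf x)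
      = ∑ x ∈ univ.filter fun x : ZMod n => addOrderOf x = j, F j := by
        refine Finset.sum_congr rfl fun x hx => ?_
        rw [(Finset.mem_filter.mp hx).2]
    _ = (j.totient : ℚ) * F j := by rw [Finset.sum_const, hcard, nsmul_eq_mul]

theorem card_cyclic_subgroups_zmod_prod (m n : ℕ) (hm : 0 < m) (hn : 0 < n) :
    Nat.card {H : AddSubgroup (ZMod m × ZMod n) // IsAddCyclic H} =
      ∑ a ∈ m.divisors, ∑ b ∈ n.divisors, Nat.totient (Nat.gcd a b) := by
  haveI : NeZero m := ⟨hm.ne'⟩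
  haveI : NeZero n := ⟨hn.ne'⟩
  have key := aux_card_cyclic_eq_sum_inv (G := ZMod m × ZMod n)
  rw [Fintype.sum_prod_type] at key
  have key2 : ∀ x : ZMod m, ∑ y : ZMod n, ((addOrderOf (x, y)).totient : ℚ)⁻¹
      = ∑ b ∈ n.divisors, (b.totient : ℚ) * (((addOrderOf x).lcm b).totient : ℚ)⁻¹ := by
    intro x
    have h := aux_sum_zmod n (fun j => (((addOrderOf x).lcm j).totient : ℚ)⁻¹)
    simp only [Prod.addOrderOf]
    exact h
  rw [Finset.sum_congr rfl fun x _ => key2 x] at key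
  rw [Finset.sum_comm] at key
  have key3 : ∀ b ∈ n.divisors,
      ∑ x : ZMod m, (b.totient : ℚ) * (((addOrderOf x).lcm b).totient : ℚ)⁻¹
        = ∑ a ∈ m.divisors, (a.totient : ℚ) *
            ((b.totient : ℚ) * ((a.lcm b).totient : ℚ)⁻¹) := by
    intro b _
    exact aux_sum_zmod m (fun j => (b.totient : ℚ) * ((j.lcm b).totient : ℚ)⁻¹)
  rw [Finset.sum_congr rfl key3] at key
  have key4 : ∀ b ∈ n.divisors, ∀ a ∈ m.divisors,
      (a.totient : ℚ) * ((b.totient : ℚ) * ((a.lcm b).totient : ℚ)⁻¹)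
        = ((a.gcd b).totient : ℚ) := by
    intro b hb a ha
    have hap : 0 < a := Nat.pos_of_mem_divisors ha
    have hbp : 0 < b := Nat.pos_of_mem_divisors hb
    have hl : ((a.lcm b).totient : ℚ) ≠ 0 := by
      exact_mod_cast (Nat.totient_pos.mpr (Nat.lcm_pos hap hbp)).ne'
    have hid := aux_totient_gcd_mul_totient_lcm a b hap hbp
    have hq : (a.totient : ℚ) * b.totient = ((a.gcd b).totient : ℚ) * (a.lcm b).totient := by
      exact_mod_cast congrArg (Nat.cast (R := ℚ)) hid.symm
    rw [← mul_assoc, hq, mul_assoc, mul_inv_cancel₀ hl, mul_one]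
  rw [Finset.sum_congr rfl fun b hb => Finset.sum_congr rfl fun a ha => key4 b hb a ha] at key
  rw [Finset.sum_comm] at key
  exact_mod_cast key
end

section
/- For all positive integers m and n, the total number of subgroups of Z_m × Z_n equals ∑_{a | m} ∑_{b | n} gcd(a,b). -/
open AddSubgroup

/-- Counting `c < b` with `b ∣ k * c`. -/
lemma count_filter_dvd (k b : ℕ) (hb : 0 < b) :
    ((Finset.range b).filter (fun c => b ∣ k * c)).card = Nat.gcd k b := by
  set g := Nat.gcd k b with hgdef
  have hg : 0 < g := Nat.gcd_pos_of_pos_right k hb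
  have hdg : b / g * g = b := Nat.div_mul_cancel (Nat.gcd_dvd_right k b)
  set d := b / g with hddef
  have hd : 0 < d := by
    rcases Nat.eq_zero_or_pos d with h | h
    · exfalso; rw [h, zero_mul] at hdg; omega
    · exact h
  have hkg : k / g * g = k := Nat.div_mul_cancel (Nat.gcd_dvd_left k b)
  have hcop : Nat.Coprime (k / g) (b / g) := Nat.coprime_div_gcd_div_gcd hg
  have key : ∀ c : ℕ, b ∣ k * c ↔ d ∣ c := by
    intro c
    constructor
    · intro h
      have h2 : d * g ∣ (k / g) * c * g := by
        rw [hdg, mul_right_comm, hkg]; exact h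
      have h3 : d ∣ (k / g) * c := (Nat.mul_dvd_mul_iff_right hg).mp h2
      exact hcop.symm.dvd_of_dvd_mul_right (by rwa [mul_comm] at h3)
    · rintro ⟨e, rfl⟩
      refine ⟨k / g * e, ?_⟩
      calc k * (d * e) = k / g * g * (d * e) := by rw [hkg]
      _ = d * g * (k / g * e) := by ring
      _ = b * (k / g * e) := by rw [hdg]
  have himg : (Finset.range b).filter (fun c => b ∣ k * c)
      = (Finset.range g).image (fun j => d * j) := by
    ext c
    simp only [Finset.mem_filter, Finset.mem_range, Finset.mem_image, key]
    constructor
    · rintro ⟨hcb, e, rfl⟩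
      exact ⟨e, Nat.lt_of_mul_lt_mul_left (by rwa [← hdg] at hcb), rfl⟩
    · rintro ⟨j, hj, rfl⟩
      exact ⟨by rw [← hdg]; exact (Nat.mul_lt_mul_left hd).mpr hj, j, rfl⟩
  rw [himg, Finset.card_image_of_injective _
    (fun x y h => Nat.eq_of_mul_eq_mul_left hd h), Finset.card_range]

/-- Subgroups of the codomain of a surjective hom correspond to subgroups of
the domain containing the kernel. -/
def subgroupEquivOver {A B : Type*} [AddCommGroup A] [AddCommGroup B] (f : A →+ B)
    (hf : Function.Surjective f) :
    AddSubgroup B ≃ {H : AddSubgroup A // f.ker ≤ H} where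
  toFun K := ⟨K.comap f, fun x hx => by
    simp only [AddSubgroup.mem_comap]
    rw [AddMonoidHom.mem_ker] at hx
    rw [hx]; exact K.zero_mem⟩
  invFun H := H.1.map f
  left_inv K := AddSubgroup.map_comap_eq_self_of_surjective hf K
  right_inv H := Subtype.ext (AddSubgroup.comap_map_eq_self H.2)

noncomputable def phi (m n : ℕ) : ℤ × ℤ →+ ZMod m × ZMod n :=
  AddMonoidHom.prodMap (Int.castAddHom (ZMod m)) (Int.castAddHom (ZMod n))

lemma phi_surj (m n : ℕ) : Function.Surjective (phi m n) := by
  rintro ⟨x, y⟩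
  obtain ⟨a, rfl⟩ := ZMod.intCast_surjective x
  obtain ⟨b, rfl⟩ := ZMod.intCast_surjective y
  exact ⟨(a, b), rfl⟩

lemma mem_ker_phi {m n : ℕ} (x : ℤ × ℤ) :
    x ∈ (phi m n).ker ↔ (m : ℤ) ∣ x.1 ∧ (n : ℤ) ∣ x.2 := by
  rw [AddMonoidHom.mem_ker, Prod.ext_iff]
  simp [phi, ZMod.intCast_zmod_eq_zero_iff_dvd]

/-- The sublattice of `ℤ × ℤ` in Hermite normal form with parameters `a b c`. -/
def L (a b c : ℤ) : AddSubgroup (ℤ × ℤ) := AddSubgroup.closure {(a, c), (0, b)}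

lemma mem_L {a b c : ℤ} (x : ℤ × ℤ) :
    x ∈ L a b c ↔ ∃ s t : ℤ, x = (s * a, s * c + t * b) := by
  rw [L, AddSubgroup.mem_closure_pair]
  constructor
  · rintro ⟨s, t, rfl⟩
    exact ⟨s, t, by simp [Prod.ext_iff, smul_eq_mul]⟩
  · rintro ⟨s, t, rfl⟩
    exact ⟨s, t, by simp [Prod.ext_iff, smul_eq_mul]⟩

lemma gen1_mem_L (a b c : ℤ) : (a, c) ∈ L a b c :=
  AddSubgroup.subset_closure (by simp)

lemma gen2_mem_L (a b c : ℤ) : ((0 : ℤ), b) ∈ L a b c :=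
  AddSubgroup.subset_closure (by simp)

lemma dvd_fst_of_mem_L {a b c : ℤ} {x : ℤ × ℤ} (hx : x ∈ L a b c) : a ∣ x.1 := by
  rw [mem_L] at hx
  obtain ⟨s, t, rfl⟩ := hx
  exact Dvd.intro_left s rfl

lemma mem_L_zero_iff {a b c : ℤ} (ha : a ≠ 0) (y : ℤ) :
    ((0 : ℤ), y) ∈ L a b c ↔ b ∣ y := by
  rw [mem_L]
  constructor
  · rintro ⟨s, t, h⟩
    rw [Prod.ext_iff] at h
    obtain ⟨h1, h2⟩ := h
    have hs : s = 0 := by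
      rcases mul_eq_zero.mp h1.symm with h | h
      · exact h
      · exact absurd h ha
    subst hs
    simp only [zero_mul, zero_add] at h2
    exact ⟨t, by linarith [h2]⟩
  · rintro ⟨t, rfl⟩
    exact ⟨0, t, by ring_nf⟩

lemma ker_le_L {m n a b c : ℕ} (ham : a ∣ m) (hbn : b ∣ n)
    (hdvd : b ∣ (m / a) * c) :
    (phi m n).ker ≤ L (a : ℤ) (b : ℤ) (c : ℤ) := by
  have hmL : ((m : ℤ), (0 : ℤ)) ∈ L (a : ℤ) (b : ℤ) (c : ℤ) := by
    rw [mem_L]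
    refine ⟨((m / a : ℕ) : ℤ), -(((m / a * c / b : ℕ)) : ℤ), ?_⟩
    have h1 : (m / a) * a = m := Nat.div_mul_cancel ham
    have h2 : (m / a * c / b) * b = m / a * c := Nat.div_mul_cancel hdvd
    rw [Prod.mk.injEq]
    constructor
    · exact_mod_cast (congrArg (Nat.cast : ℕ → ℤ) h1).symm
    · have := congrArg (Nat.cast : ℕ → ℤ) h2
      push_cast at this ⊢
      linarith
  have hnL : ((0 : ℤ), (n : ℤ)) ∈ L (a : ℤ) (b : ℤ) (c : ℤ) := by
    rw [mem_L]
    refine ⟨0, ((n / b : ℕ) : ℤ), ?_⟩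
    have h1 : (n / b) * b = n := Nat.div_mul_cancel hbn
    have h2 := congrArg (Nat.cast : ℕ → ℤ) h1
    rw [Nat.cast_mul] at h2
    rw [Prod.mk.injEq]
    refine ⟨by ring, by linarith⟩
  intro x hx
  rw [mem_ker_phi] at hx
  obtain ⟨⟨s, hs⟩, ⟨t, ht⟩⟩ := hx
  have : x = s • ((m : ℤ), (0 : ℤ)) + t • ((0 : ℤ), (n : ℤ)) := by
    rw [Prod.smul_mk, Prod.smul_mk, Prod.mk_add_mk, Prod.mk.injEq]
    constructor
    · rw [smul_eq_mul, smul_eq_mul]; rw [hs]; ring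
    · rw [smul_eq_mul, smul_eq_mul]; rw [ht]; ring
  rw [this]
  exact AddSubgroup.add_mem _ (AddSubgroup.zsmul_mem _ hmL s)
    (AddSubgroup.zsmul_mem _ hnL t)

lemma exists_rep {m n : ℕ} (hm : 0 < m) (hn : 0 < n) (H : AddSubgroup (ℤ × ℤ))
    (hm1 : ((m : ℤ), (0 : ℤ)) ∈ H) (hn1 : ((0 : ℤ), (n : ℤ)) ∈ H) :
    ∃ a b c : ℕ, a ∣ m ∧ b ∣ n ∧ c < b ∧ b ∣ (m / a) * c ∧
      H = L (a : ℤ) (b : ℤ) (c : ℤ) := by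
  obtain ⟨b0, hB⟩ := Int.subgroup_cyclic (H.comap (AddMonoidHom.inr ℤ ℤ))
  have hBmem : ∀ y : ℤ, ((0 : ℤ), y) ∈ H ↔ (b0.natAbs : ℤ) ∣ y := by
    intro y
    have : ((0 : ℤ), y) ∈ H ↔ y ∈ H.comap (AddMonoidHom.inr ℤ ℤ) := Iff.rfl
    rw [this, hB, ← AddSubgroup.zmultiples_eq_closure, Int.mem_zmultiples_iff,
      Int.natAbs_dvd]
  set b := b0.natAbs with hbdef
  have hbn : b ∣ n := Int.natCast_dvd_natCast.mp ((hBmem n).mp hn1)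
  have hb : 0 < b := by
    rcases Nat.eq_zero_or_pos b with h | h
    · exfalso
      have := (hBmem n).mp hn1
      rw [h] at this
      simp only [Nat.cast_zero, zero_dvd_iff, Nat.cast_eq_zero] at this
      omega
    · exact h
  obtain ⟨a0, hA⟩ := Int.subgroup_cyclic (H.map (AddMonoidHom.fst ℤ ℤ))
  have hAmem : ∀ x : ℤ, (∃ y, (x, y) ∈ H) ↔ (a0.natAbs : ℤ) ∣ x := by
    intro x
    have h1 : (∃ y, (x, y) ∈ H) ↔ x ∈ H.map (AddMonoidHom.fst ℤ ℤ) := by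
      constructor
      · rintro ⟨y, hy⟩; exact ⟨(x, y), hy, rfl⟩
      · rintro ⟨⟨u, v⟩, huv, h⟩
        exact ⟨v, by simpa using h ▸ huv⟩
    rw [h1, hA, ← AddSubgroup.zmultiples_eq_closure, Int.mem_zmultiples_iff,
      Int.natAbs_dvd]
  set a := a0.natAbs with hadef
  have ham : a ∣ m := Int.natCast_dvd_natCast.mp ((hAmem m).mp ⟨0, hm1⟩)
  have ha : 0 < a := by
    rcases Nat.eq_zero_or_pos a with h | h
    · exfalso
      have := (hAmem m).mp ⟨0, hm1⟩
      rw [h] at this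
      simp only [Nat.cast_zero, zero_dvd_iff, Nat.cast_eq_zero] at this
      omega
    · exact h
  obtain ⟨y0, hy0⟩ := (hAmem (a : ℤ)).mpr dvd_rfl
  have hbz : (b : ℤ) ≠ 0 := by exact_mod_cast hb.ne'
  have hbzpos : (0 : ℤ) < b := by exact_mod_cast hb
  set c' := y0 % (b : ℤ) with hc'def
  have hc'0 : 0 ≤ c' := Int.emod_nonneg y0 hbz
  have hc'b : c' < b := Int.emod_lt_of_pos y0 hbzpos
  set c := c'.toNat with hcdef
  have hcc' : (c : ℤ) = c' := Int.toNat_of_nonneg hc'0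
  have hsub : ((0 : ℤ), y0 - c') ∈ H := by
    rw [hBmem]
    exact ⟨y0 / b, by rw [hc'def]; rw [Int.emod_def]; ring⟩
  have hac : ((a : ℤ), c') ∈ H := by
    have := H.sub_mem hy0 hsub
    simpa using this
  have hOB : ((0 : ℤ), (b : ℤ)) ∈ H := (hBmem b).mpr dvd_rfl
  refine ⟨a, b, c, ham, hbn, ?_, ?_, ?_⟩
  · omega
  · have hmem : ((0 : ℤ), ((m / a : ℕ) : ℤ) * c') ∈ H := by
      have he : ((m / a : ℕ) : ℤ) * (a : ℤ) = (m : ℤ) := by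
        exact_mod_cast congrArg Nat.cast (Nat.div_mul_cancel ham)
      have heq : ((0 : ℤ), ((m / a : ℕ) : ℤ) * c')
          = ((m / a : ℕ) : ℤ) • ((a : ℤ), c') - ((m : ℤ), 0) := by
        rw [Prod.smul_mk, Prod.mk_sub_mk, Prod.mk.injEq]
        constructor
        · rw [smul_eq_mul, he]; ring
        · rw [smul_eq_mul]; ring
      rw [heq]
      exact H.sub_mem (H.zsmul_mem hac _) hm1
    have := (hBmem _).mp hmem
    rw [← hcc'] at this
    exact_mod_cast this
  · apply le_antisymm
    · intro x hx
      obtain ⟨x1, x2⟩ := x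
      obtain ⟨s, hs⟩ := (hAmem x1).mp ⟨x2, hx⟩
      have h2 : ((0 : ℤ), x2 - s * c') ∈ H := by
        have := H.sub_mem hx (H.zsmul_mem hac s)
        simpa [Prod.ext_iff, smul_eq_mul, hs, mul_comm] using this
      obtain ⟨t, ht⟩ := (hBmem _).mp h2
      rw [mem_L]
      refine ⟨s, t, ?_⟩
      rw [Prod.ext_iff]
      constructor
      · simp [hs, mul_comm]
      · simp only []
        rw [hcc']
        linear_combination ht
    · rw [L, AddSubgroup.closure_le]
      rintro x (rfl | rfl)
      · rw [hcc']; exact hac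
      · exact hOB

lemma rep_unique {a b c a' b' c' : ℕ} (ha : 0 < a) (hb : 0 < b) (hc : c < b)
    (ha' : 0 < a') (hb' : 0 < b') (hc' : c' < b')
    (h : L (a : ℤ) (b : ℤ) (c : ℤ) = L (a' : ℤ) (b' : ℤ) (c' : ℤ)) :
    a = a' ∧ b = b' ∧ c = c' := by
  have haz : (a : ℤ) ≠ 0 := by exact_mod_cast ha.ne'
  have haz' : (a' : ℤ) ≠ 0 := by exact_mod_cast ha'.ne'
  have h1 : (a' : ℤ) ∣ (a : ℤ) := by
    have := dvd_fst_of_mem_L (h ▸ gen1_mem_L (a : ℤ) b c)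
    exact this
  have h2 : (a : ℤ) ∣ (a' : ℤ) := by
    have := dvd_fst_of_mem_L (h.symm ▸ gen1_mem_L (a' : ℤ) b' c')
    exact this
  have haa : a = a' := Nat.dvd_antisymm (Int.natCast_dvd_natCast.mp h2)
    (Int.natCast_dvd_natCast.mp h1)
  have h3 : (b' : ℤ) ∣ (b : ℤ) :=
    (mem_L_zero_iff haz' _).mp (h ▸ gen2_mem_L (a : ℤ) b c)
  have h4 : (b : ℤ) ∣ (b' : ℤ) :=
    (mem_L_zero_iff haz _).mp (h.symm ▸ gen2_mem_L (a' : ℤ) b' c')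
  have hbb : b = b' := Nat.dvd_antisymm (Int.natCast_dvd_natCast.mp h4)
    (Int.natCast_dvd_natCast.mp h3)
  refine ⟨haa, hbb, ?_⟩
  subst haa; subst hbb
  have h5 : ((a : ℤ), (c : ℤ)) ∈ L (a : ℤ) (b : ℤ) (c' : ℤ) := h ▸ gen1_mem_L _ _ _
  rw [mem_L] at h5
  obtain ⟨s, t, hst⟩ := h5
  rw [Prod.mk.injEq] at hst
  obtain ⟨hs1, hs2⟩ := hst
  have hs : s = 1 := by
    have : (a : ℤ) * 1 = a * s := by linarith [hs1]
    have := mul_left_cancel₀ haz this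
    omega
  subst hs
  have hd : (b : ℤ) ∣ ((c : ℤ) - (c' : ℤ)) := ⟨t, by linarith [hs2]⟩
  have : ((c : ℤ) - (c' : ℤ)) = 0 := by
    apply Int.eq_zero_of_abs_lt_dvd hd
    rw [abs_lt]
    constructor <;> [push_cast; push_cast] <;> omega
  omega

theorem card_subgroups_zmod_prod (m n : ℕ) (hm : 0 < m) (hn : 0 < n) :
    Nat.card (AddSubgroup (ZMod m × ZMod n)) =
      ∑ a ∈ m.divisors, ∑ b ∈ n.divisors, Nat.gcd a b := by
  classical
  have e1 : Nat.card (AddSubgroup (ZMod m × ZMod n))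
      = Nat.card {H : AddSubgroup (ℤ × ℤ) // (phi m n).ker ≤ H} :=
    Nat.card_congr (subgroupEquivOver (phi m n) (phi_surj m n))
  let F : (Σ a : {x // x ∈ m.divisors}, Σ b : {x // x ∈ n.divisors},
      {c : Fin b.1 // b.1 ∣ (m / a.1) * c.1}) →
      {H : AddSubgroup (ℤ × ℤ) // (phi m n).ker ≤ H} :=
    fun s => ⟨L (s.1.1 : ℤ) (s.2.1.1 : ℤ) ((s.2.2.1.1 : ℕ) : ℤ),
      ker_le_L (Nat.dvd_of_mem_divisors s.1.2) (Nat.dvd_of_mem_divisors s.2.1.2)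
        s.2.2.2⟩
  have hFbij : Function.Bijective F := by
    constructor
    · rintro ⟨⟨a, haa⟩, ⟨b, hbb⟩, ⟨c, hcc⟩⟩ ⟨⟨a', haa'⟩, ⟨b', hbb'⟩, ⟨c', hcc'⟩⟩ h
      have hL : L (a : ℤ) (b : ℤ) ((c.1 : ℕ) : ℤ)
          = L (a' : ℤ) (b' : ℤ) ((c'.1 : ℕ) : ℤ) := congrArg Subtype.val h
      obtain ⟨e1, e2, e3⟩ := rep_unique (Nat.pos_of_mem_divisors haa)
        (Nat.pos_of_mem_divisors hbb) c.isLt (Nat.pos_of_mem_divisors haa')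
        (Nat.pos_of_mem_divisors hbb') c'.isLt hL
      subst e1; subst e2
      obtain rfl : c = c' := Fin.ext e3
      rfl
    · rintro ⟨H, hH⟩
      have hm1 : ((m : ℤ), (0 : ℤ)) ∈ H :=
        hH ((mem_ker_phi _).mpr ⟨dvd_rfl, dvd_zero _⟩)
      have hn1 : ((0 : ℤ), (n : ℤ)) ∈ H :=
        hH ((mem_ker_phi _).mpr ⟨dvd_zero _, dvd_rfl⟩)
      obtain ⟨a, b, c, ham, hbn, hcb, hdvd, hHL⟩ := exists_rep hm hn H hm1 hn1
      exact ⟨⟨⟨a, Nat.mem_divisors.mpr ⟨ham, hm.ne'⟩⟩,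
        ⟨b, Nat.mem_divisors.mpr ⟨hbn, hn.ne'⟩⟩, ⟨⟨c, hcb⟩, hdvd⟩⟩,
        Subtype.ext hHL.symm⟩
  have e2 : Nat.card {H : AddSubgroup (ℤ × ℤ) // (phi m n).ker ≤ H}
      = Nat.card (Σ a : {x // x ∈ m.divisors}, Σ b : {x // x ∈ n.divisors},
        {c : Fin b.1 // b.1 ∣ (m / a.1) * c.1}) :=
    (Nat.card_eq_of_bijective F hFbij).symm
  rw [e1, e2, Nat.card_eq_fintype_card]
  have fin_count : ∀ k N : ℕ, 0 < N →
      Fintype.card {c : Fin N // N ∣ k * c.1} = Nat.gcd k N := by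
    intro k N hN
    rw [Fintype.card_subtype, Finset.card_filter,
      Fin.sum_univ_eq_sum_range (fun j => if N ∣ k * j then 1 else 0) N,
      ← Finset.card_filter, count_filter_dvd k N hN]
  rw [show Fintype.card (Σ a : {x // x ∈ m.divisors}, Σ b : {x // x ∈ n.divisors},
      {c : Fin b.1 // b.1 ∣ (m / a.1) * c.1}) = ∑ a : {x // x ∈ m.divisors},
      ∑ b : {x // x ∈ n.divisors}, Fintype.card {c : Fin b.1 // b.1 ∣ (m / a.1) * c.1} by
    rw [Fintype.card_sigma]
    exact Finset.sum_congr rfl fun a _ => Fintype.card_sigma]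
  have step : ∀ a : {x // x ∈ m.divisors},
      ∑ b : {x // x ∈ n.divisors}, Fintype.card {c : Fin b.1 // b.1 ∣ (m / a.1) * c.1}
        = ∑ b : {x // x ∈ n.divisors}, Nat.gcd (m / a.1) b.1 := by
    intro a
    exact Finset.sum_congr rfl fun b _ =>
      fin_count _ _ (Nat.pos_of_mem_divisors b.2)
  rw [Finset.sum_congr rfl fun a _ => step a]
  rw [show (∑ a : {x // x ∈ m.divisors}, ∑ b : {x // x ∈ n.divisors},
        Nat.gcd (m / a.1) b.1)
      = ∑ a ∈ m.divisors, ∑ b ∈ n.divisors, Nat.gcd (m / a) b by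
    rw [← Finset.sum_coe_sort m.divisors (fun a => ∑ b ∈ n.divisors, Nat.gcd (m / a) b)]
    exact Finset.sum_congr rfl fun a _ =>
      Finset.sum_coe_sort n.divisors (fun b => Nat.gcd (m / a.1) b)]
  exact Nat.sum_div_divisors m (fun a => ∑ b ∈ n.divisors, Nat.gcd a b)
end

section
/- For positive integers n_1, ..., n_k, the number of cyclic subgroups of Z_{n_1} × ⋯ × Z_{n_k} equals ∑ φ(a_1)⋯φ(a_k)/φ(lcm(a_1,...,a_k)), the sum being over all tuples (a_1,...,a_k) with a_i | n_i for each i. -/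
open AddSubgroup Finset

lemma my_isAddCyclic_zmultiples {G : Type*} [AddGroup G] (g : G) :
    IsAddCyclic (zmultiples g) := by
  refine ⟨⟨g, mem_zmultiples g⟩, fun x => ?_⟩
  obtain ⟨m, hm⟩ := x.2
  exact ⟨m, Subtype.ext (by simpa using hm)⟩

lemma my_zmultiples_eq_iff {G : Type*} [AddGroup G] [Finite G] {g : G} {H : AddSubgroup G} :
    zmultiples g = H ↔ g ∈ H ∧ addOrderOf g = Nat.card H := by
  constructor
  · rintro rfl
    exact ⟨mem_zmultiples g, (Nat.card_zmultiples g).symm⟩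
  · rintro ⟨hg, hord⟩
    have hle : zmultiples g ≤ H := (zmultiples_le).2 hg
    have : (zmultiples g : Set G) = (H : Set G) := by
      apply Set.eq_of_subset_of_ncard_le hle
      rw [← Nat.card_coe_set_eq, ← Nat.card_coe_set_eq]
      simp only [SetLike.coe_sort_coe]
      rw [Nat.card_zmultiples, hord]
    exact SetLike.coe_injective this

lemma my_addOrderOf_pi {ι : Type*} [Fintype ι] {M : ι → Type*} [∀ i, AddMonoid (M i)]
    (x : ∀ i, M i) : addOrderOf x = Finset.univ.lcm fun i => addOrderOf (x i) := by
  apply Nat.dvd_antisymm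
  · rw [addOrderOf_dvd_iff_nsmul_eq_zero]
    funext i
    exact addOrderOf_dvd_iff_nsmul_eq_zero.mp (Finset.dvd_lcm (mem_univ i))
  · rw [Finset.lcm_dvd_iff]
    intro i _
    rw [addOrderOf_dvd_iff_nsmul_eq_zero]
    have := addOrderOf_nsmul_eq_zero x
    exact congrFun this i

lemma my_card_cyclic (G : Type*) [AddGroup G] [Fintype G] :
    (Nat.card {H : AddSubgroup G // IsAddCyclic H} : ℚ)
      = ∑ g : G, 1 / (Nat.totient (addOrderOf g) : ℚ) := by
  classical
  set s : Finset (AddSubgroup G) := Finset.univ.image (fun g : G => zmultiples g) with hs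
  have fibcard : ∀ g₀ : G,
      (Finset.univ.filter fun g : G => zmultiples g = zmultiples g₀).card
        = Nat.totient (addOrderOf g₀) := by
    intro g₀
    haveI := my_isAddCyclic_zmultiples g₀
    have h1 : (Finset.univ.filter fun g : G => zmultiples g = zmultiples g₀).card
        = (Finset.univ.filter fun h : zmultiples g₀ => addOrderOf h = addOrderOf g₀).card := by
      refine Finset.card_bij' (fun g hg => ⟨g, ?_⟩) (fun h _ => (h : G)) ?_ ?_ ?_ ?_
      · have := (Finset.mem_filter.1 hg).2
        rw [← this]; exact mem_zmultiples g
      · intro g hg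
        have h2 := (my_zmultiples_eq_iff.1 (Finset.mem_filter.1 hg).2).2
        simp only [Finset.mem_filter, Finset.mem_univ, true_and]
        rw [AddSubgroup.addOrderOf_mk, h2, Nat.card_zmultiples]
      · intro h hh
        have h3 := (Finset.mem_filter.1 hh).2
        simp only [Finset.mem_filter, Finset.mem_univ, true_and]
        rw [my_zmultiples_eq_iff]
        refine ⟨h.2, ?_⟩
        rw [AddSubgroup.addOrderOf_coe, h3, Nat.card_zmultiples]
      · intro g hg; rfl
      · intro h hh; rfl
    rw [h1]
    have hd : addOrderOf g₀ ∣ Fintype.card (zmultiples g₀) := by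
      rw [← Nat.card_eq_fintype_card, Nat.card_zmultiples]
    simpa using IsAddCyclic.card_addOrderOf_eq_totient (α := zmultiples g₀) hd
  have hmaps : ∀ g ∈ (Finset.univ : Finset G), zmultiples g ∈ s :=
    fun g _ => Finset.mem_image_of_mem _ (Finset.mem_univ g)
  rw [← Finset.sum_fiberwise_of_maps_to hmaps (fun g : G => 1 / (Nat.totient (addOrderOf g) : ℚ))]
  have hsum : ∀ H ∈ s, (∑ g ∈ Finset.univ.filter fun g : G => zmultiples g = H,
      1 / (Nat.totient (addOrderOf g) : ℚ)) = 1 := by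
    intro H hH
    obtain ⟨g₀, -, rfl⟩ := Finset.mem_image.1 hH
    have hval : ∀ g ∈ Finset.univ.filter fun g : G => zmultiples g = zmultiples g₀,
        addOrderOf g = addOrderOf g₀ := by
      intro g hg
      have := (my_zmultiples_eq_iff.1 (Finset.mem_filter.1 hg).2).2
      rw [this, Nat.card_zmultiples]
    rw [Finset.sum_congr rfl (fun g hg => by rw [hval g hg]), Finset.sum_const, fibcard g₀,
      nsmul_eq_mul, mul_one_div, div_self]
    exact_mod_cast (Nat.totient_pos.2 (addOrderOf_pos g₀)).ne'
  rw [Finset.sum_congr rfl hsum, Finset.sum_const, nsmul_eq_mul, mul_one]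
  congr 1
  have hset : {H : AddSubgroup G | IsAddCyclic H} = ↑s := by
    ext H
    simp only [Set.mem_setOf_eq, hs, Finset.coe_image, Finset.coe_univ, Set.image_univ,
      Set.mem_range]
    constructor
    · intro h
      obtain ⟨⟨g, hg⟩, hgen⟩ := h.exists_generator
      refine ⟨g, le_antisymm (zmultiples_le.2 hg) fun x hx => ?_⟩
      obtain ⟨m, hm⟩ := mem_zmultiples_iff.1 (hgen ⟨x, hx⟩)
      exact mem_zmultiples_iff.2 ⟨m, by simpa using congrArg Subtype.val hm⟩
    · rintro ⟨g, rfl⟩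
      exact my_isAddCyclic_zmultiples g
  calc Nat.card {H : AddSubgroup G // IsAddCyclic H}
      = Set.ncard {H : AddSubgroup G | IsAddCyclic H} := (Nat.card_coe_set_eq _).symm
    _ = s.card := by rw [hset, Set.ncard_coe_finset]

theorem card_cyclic_subgroups_pi_zmod (k : ℕ) (n : Fin k → ℕ) (hn : ∀ i, 0 < n i) :
    (Nat.card {H : AddSubgroup (∀ i, ZMod (n i)) // IsAddCyclic H} : ℚ) =
      ∑ a ∈ Fintype.piFinset (fun i => (n i).divisors),
        (∏ i, (Nat.totient (a i) : ℚ)) / (Nat.totient (Finset.univ.lcm a) : ℚ) := by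
  haveI : ∀ i, NeZero (n i) := fun i => ⟨(hn i).ne'⟩
  classical
  rw [my_card_cyclic]
  have hmaps : ∀ g ∈ (Finset.univ : Finset (∀ i, ZMod (n i))),
      (fun i => addOrderOf (g i)) ∈ Fintype.piFinset (fun i => (n i).divisors) := by
    intro g _
    rw [Fintype.mem_piFinset]
    intro i
    rw [Nat.mem_divisors]
    refine ⟨?_, (hn i).ne'⟩
    have := addOrderOf_dvd_card (x := g i)
    simpa [ZMod.card] using this
  rw [← Finset.sum_fiberwise_of_maps_to hmaps
    (fun g : ∀ i, ZMod (n i) => 1 / (Nat.totient (addOrderOf g) : ℚ))]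
  refine Finset.sum_congr rfl fun a ha => ?_
  have hval : ∀ g ∈ Finset.univ.filter
      (fun g : ∀ i, ZMod (n i) => (fun i => addOrderOf (g i)) = a),
      addOrderOf g = Finset.univ.lcm a := by
    intro g hg
    rw [my_addOrderOf_pi, (Finset.mem_filter.1 hg).2]
  rw [Finset.sum_congr rfl (fun g hg => by rw [hval g hg]), Finset.sum_const]
  have hcard : (Finset.univ.filter
      (fun g : ∀ i, ZMod (n i) => (fun i => addOrderOf (g i)) = a)).card
      = ∏ i, Nat.totient (a i) := by
    have heq : (Finset.univ.filter
        (fun g : ∀ i, ZMod (n i) => (fun i => addOrderOf (g i)) = a))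
        = Fintype.piFinset (fun i => Finset.univ.filter
            fun x : ZMod (n i) => addOrderOf x = a i) := by
      ext g
      simp [Fintype.mem_piFinset, funext_iff]
    rw [heq, Fintype.card_piFinset]
    refine Finset.prod_congr rfl fun i _ => ?_
    have hd : a i ∣ Fintype.card (ZMod (n i)) := by
      rw [ZMod.card]
      exact (Nat.mem_divisors.1 ((Fintype.mem_piFinset.1 ha) i)).1
    simpa using IsAddCyclic.card_addOrderOf_eq_totient (α := ZMod (n i)) hd
  rw [hcard, nsmul_eq_mul]
  push_cast
  ring
end

section
/- For a prime p and integers 1 ≤ α_1 ≤ α_2, the number of cyclic subgroups of Z_{p^{α_1}} × Z_{p^{α_2}} equals 2 + 2p + ⋯ + 2p^{α_1 - 1} + (α_2 - α_1 + 1)p^{α_1}. -/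
open Finset AddSubgroup

open scoped Classical in
private lemma countDvd {G : Type*} [AddCommGroup G] [Fintype G] [IsAddCyclic G]
    {m : ℕ} (hm : m ∣ Fintype.card G) (hm0 : m ≠ 0) :
    #(univ.filter fun x : G => addOrderOf x ∣ m) = m := by
  calc #(univ.filter fun x : G => addOrderOf x ∣ m)
      = ∑ e ∈ m.divisors,
          #((univ.filter fun x : G => addOrderOf x ∣ m).filter fun x => addOrderOf x = e) :=
        Finset.card_eq_sum_card_fiberwise
          (fun x hx => Nat.mem_divisors.mpr ⟨(Finset.mem_filter.mp hx).2, hm0⟩)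
    _ = ∑ e ∈ m.divisors, e.totient := by
        refine Finset.sum_congr rfl fun e he => ?_
        have he' := Nat.mem_divisors.mp he
        rw [Finset.filter_filter]
        rw [Finset.filter_congr (q := fun x : G => addOrderOf x = e)
          (fun x _ => ⟨fun h => h.2, fun h => ⟨h ▸ he'.1, h⟩⟩)]
        exact IsAddCyclic.card_addOrderOf_eq_totient (he'.1.trans hm)
    _ = m := Nat.sum_totient m

open scoped Classical in
private lemma countZMod {p : ℕ} (hp : p.Prime) (α k : ℕ) [NeZero (p ^ α)] :
    #(univ.filter fun x : ZMod (p ^ α) => addOrderOf x ∣ p ^ k) = p ^ min k α := by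
  rcases le_total k α with h | h
  · rw [min_eq_left h]
    exact countDvd (by rw [ZMod.card]; exact pow_dvd_pow p h) (pow_ne_zero _ hp.ne_zero)
  · rw [min_eq_right h, Finset.filter_true_of_mem, Finset.card_univ, ZMod.card]
    intro x _
    exact addOrderOf_dvd_card.trans (by rw [ZMod.card]; exact pow_dvd_pow p h)

open scoped Classical in
private lemma Dval {p : ℕ} (hp : p.Prime) (α₁ α₂ k : ℕ) [NeZero (p ^ α₁)] [NeZero (p ^ α₂)] :
    #(univ.filter fun g : ZMod (p ^ α₁) × ZMod (p ^ α₂) => addOrderOf g ∣ p ^ k)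
      = p ^ min k α₁ * p ^ min k α₂ := by
  rw [Finset.filter_congr (q := fun g : ZMod (p ^ α₁) × ZMod (p ^ α₂) =>
      addOrderOf g.1 ∣ p ^ k ∧ addOrderOf g.2 ∣ p ^ k)
    (fun g _ => by rw [Prod.addOrderOf, Nat.lcm_dvd_iff])]
  rw [← Finset.univ_product_univ,
    Finset.filter_product (fun a : ZMod (p ^ α₁) => addOrderOf a ∣ p ^ k)
      (fun b : ZMod (p ^ α₂) => addOrderOf b ∣ p ^ k),
    Finset.card_product, countZMod hp, countZMod hp]

private lemma zmultiples_isAddCyclic {G : Type*} [AddCommGroup G] (a : G) :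
    IsAddCyclic (zmultiples a) := by
  refine ⟨⟨⟨a, mem_zmultiples a⟩, fun x => ?_⟩⟩
  obtain ⟨n, hn⟩ := x.2
  exact ⟨n, Subtype.ext (by simpa using hn)⟩

open scoped Classical in
private lemma DE {p : ℕ} (hp : p.Prime) {G : Type*} [AddCommGroup G] [Fintype G] (k : ℕ) :
    #(univ.filter fun g : G => addOrderOf g ∣ p ^ k)
      + #(univ.filter fun g : G => addOrderOf g = p ^ (k + 1))
      = #(univ.filter fun g : G => addOrderOf g ∣ p ^ (k + 1)) := by
  have h1 : (univ.filter fun g : G => addOrderOf g ∣ p ^ (k + 1)).filter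
      (fun g => addOrderOf g ∣ p ^ k) = univ.filter fun g : G => addOrderOf g ∣ p ^ k := by
    rw [Finset.filter_filter]
    exact Finset.filter_congr fun g _ =>
      ⟨fun h => h.2, fun h => ⟨h.trans (pow_dvd_pow p k.le_succ), h⟩⟩
  have h2 : (univ.filter fun g : G => addOrderOf g ∣ p ^ (k + 1)).filter
      (fun g => ¬ addOrderOf g ∣ p ^ k) = univ.filter fun g : G => addOrderOf g = p ^ (k + 1) := by
    rw [Finset.filter_filter]
    refine Finset.filter_congr fun g _ => ⟨fun h => ?_, fun h => ?_⟩
    · obtain ⟨j, hj, hje⟩ := (Nat.dvd_prime_pow hp).mp h.1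
      rcases Nat.lt_or_ge j (k + 1) with hlt | hge
      · exact absurd (hje ▸ pow_dvd_pow p (Nat.lt_succ_iff.mp hlt)) h.2
      · rw [hje]; congr 1; omega
    · rw [h]
      exact ⟨dvd_rfl, fun hd => by
        have := Nat.le_of_dvd (pow_pos hp.pos k) hd
        exact absurd this (not_le.mpr (Nat.pow_lt_pow_right hp.one_lt k.lt_succ_self))⟩
  rw [← Finset.card_filter_add_card_filter_not
    (p := fun g : G => addOrderOf g ∣ p ^ k)
    (s := univ.filter fun g : G => addOrderOf g ∣ p ^ (k + 1)), h1, h2]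

open scoped Classical in
private lemma fiber_card {p : ℕ} {G : Type*} [AddCommGroup G] [Fintype G] (k : ℕ)
    (H : AddSubgroup G) (hH : IsAddCyclic H) (hcard : Nat.card H = p ^ k) :
    #((univ.filter fun g : G => addOrderOf g = p ^ k).filter fun g => zmultiples g = H)
      = (p ^ k).totient := by
  have hset : ((univ.filter fun g : G => addOrderOf g = p ^ k).filter fun g => zmultiples g = H)
      = univ.filter fun g : G => g ∈ H ∧ addOrderOf g = p ^ k := by
    ext g
    simp only [Finset.mem_filter, Finset.mem_univ, true_and]
    constructor
    · rintro ⟨ho, rfl⟩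
      exact ⟨mem_zmultiples g, ho⟩
    · rintro ⟨hm, ho⟩
      refine ⟨ho, AddSubgroup.eq_of_le_of_card_ge (zmultiples_le_of_mem hm) ?_⟩
      rw [Nat.card_zmultiples, hcard, ho]
  rw [hset]
  haveI : IsAddCyclic H := hH
  have hcard' : Fintype.card H = p ^ k := by rw [← Nat.card_eq_fintype_card, hcard]
  have := IsAddCyclic.card_addOrderOf_eq_totient (α := H) (d := p ^ k) (by rw [hcard'])
  rw [← this]
  refine (Finset.card_bij (fun (h : H) _ => (h : G)) ?_ ?_ ?_).symm
  · intro h hh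
    rw [Finset.mem_filter] at hh ⊢
    exact ⟨Finset.mem_univ _, h.2, by rw [AddSubgroup.addOrderOf_coe]; exact hh.2⟩
  · intro a _ b _ hab
    exact Subtype.ext hab
  · intro g hg
    rw [Finset.mem_filter] at hg
    exact ⟨⟨g, hg.2.1⟩, Finset.mem_filter.mpr ⟨Finset.mem_univ _,
      by rw [← AddSubgroup.addOrderOf_coe]; exact hg.2.2⟩, rfl⟩

open scoped Classical in
private lemma NE {p : ℕ} (hp : p.Prime) {G : Type*} [AddCommGroup G] [Fintype G] (k : ℕ) :
    #(univ.filter fun H : AddSubgroup G => IsAddCyclic H ∧ Nat.card H = p ^ k)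
        * (p ^ k).totient
      = #(univ.filter fun g : G => addOrderOf g = p ^ k) := by
  rw [Finset.card_eq_sum_card_fiberwise (f := fun g : G => zmultiples g)
    (t := univ.filter fun H : AddSubgroup G => IsAddCyclic H ∧ Nat.card H = p ^ k)
    (fun g hg => Finset.mem_filter.mpr ⟨Finset.mem_univ _, zmultiples_isAddCyclic g,
      by rw [Nat.card_zmultiples]; exact (Finset.mem_filter.mp hg).2⟩)]
  rw [Finset.sum_congr rfl fun H hH => fiber_card k H (Finset.mem_filter.mp hH).2.1
    (Finset.mem_filter.mp hH).2.2]
  rw [Finset.sum_const, smul_eq_mul]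

private lemma sumN_base (p a : ℕ) :
    ∑ k ∈ Finset.range (a + 1),
        (if k = 0 then 1 else if k ≤ a then p ^ (k - 1) + p ^ k else p ^ a)
      = (∑ i ∈ Finset.range a, 2 * p ^ i) + p ^ a := by
  rw [Finset.sum_range_succ']
  have hstep : ∀ k ∈ Finset.range a,
      (if k + 1 = 0 then 1 else if k + 1 ≤ a then p ^ (k + 1 - 1) + p ^ (k + 1) else p ^ a)
        = p ^ k + p ^ (k + 1) := by
    intro k hk
    rw [if_neg (Nat.succ_ne_zero k), if_pos (show k + 1 ≤ a from Finset.mem_range.mp hk), Nat.add_sub_cancel]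
  rw [Finset.sum_congr rfl hstep, if_pos rfl, Finset.sum_add_distrib]
  have hB : (∑ k ∈ Finset.range a, p ^ (k + 1)) + 1 = (∑ k ∈ Finset.range a, p ^ k) + p ^ a := by
    have h1 : ∑ k ∈ Finset.range (a + 1), p ^ k
        = (∑ k ∈ Finset.range a, p ^ (k + 1)) + p ^ 0 := Finset.sum_range_succ' _ a
    have h2 : ∑ k ∈ Finset.range (a + 1), p ^ k
        = (∑ k ∈ Finset.range a, p ^ k) + p ^ a := Finset.sum_range_succ _ a
    rw [pow_zero] at h1
    omega
  have h2A : ∑ i ∈ Finset.range a, 2 * p ^ i = 2 * ∑ i ∈ Finset.range a, p ^ i :=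
    (Finset.mul_sum _ _ _).symm
  omega

private lemma sumN (p a b : ℕ) (h1 : 1 ≤ a) (hab : a ≤ b) :
    ∑ k ∈ Finset.range (b + 1),
        (if k = 0 then 1 else if k ≤ a then p ^ (k - 1) + p ^ k else p ^ a)
      = (∑ i ∈ Finset.range a, 2 * p ^ i) + (b - a + 1) * p ^ a := by
  induction b with
  | zero => omega
  | succ n ih =>
    rcases Nat.lt_or_ge n a with hn | hn
    · have : a = n + 1 := by omega
      subst this
      rw [sumN_base, Nat.sub_self, Nat.zero_add, one_mul]
    · rw [Finset.sum_range_succ, ih hn]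
      have hif : (if n + 1 = 0 then 1 else if n + 1 ≤ a then p ^ (n + 1 - 1) + p ^ (n + 1)
          else p ^ a) = p ^ a := by
        rw [if_neg (Nat.succ_ne_zero n), if_neg (by omega)]
      rw [hif]
      have : n + 1 - a + 1 = (n - a + 1) + 1 := by omega
      rw [this, add_mul, one_mul]
      ring

open scoped Classical in
private lemma Nval {p α₁ α₂ : ℕ} (hp : p.Prime) (h12 : α₁ ≤ α₂)
    [NeZero (p ^ α₁)] [NeZero (p ^ α₂)] (k : ℕ) (hk : k ≤ α₂) :
    #(univ.filter fun H : AddSubgroup (ZMod (p ^ α₁) × ZMod (p ^ α₂)) =>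
        IsAddCyclic H ∧ Nat.card H = p ^ k)
      = if k = 0 then 1 else if k ≤ α₁ then p ^ (k - 1) + p ^ k else p ^ α₁ := by
  have htotpos : 0 < (p ^ k).totient := Nat.totient_pos.mpr (pow_pos hp.pos k)
  refine Nat.eq_of_mul_eq_mul_right htotpos ?_
  rw [NE hp k]
  rcases Nat.eq_zero_or_pos k with rfl | hkpos
  · have he : #(univ.filter fun g : ZMod (p ^ α₁) × ZMod (p ^ α₂) => addOrderOf g = p ^ 0)
        = 1 := by
      rw [Finset.filter_congr (q := fun g : ZMod (p ^ α₁) × ZMod (p ^ α₂) =>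
          addOrderOf g ∣ p ^ 0) (fun g _ => by simp)]
      rw [Dval hp]
      simp
    rw [he]
    simp
  · obtain ⟨j, rfl⟩ : ∃ j, k = j + 1 := ⟨k - 1, by omega⟩
    have hDE := DE hp (G := ZMod (p ^ α₁) × ZMod (p ^ α₂)) j
    rw [Dval hp, Dval hp] at hDE
    have htot : (p ^ (j + 1)).totient = p ^ j * (p - 1) := by
      rw [Nat.totient_prime_pow hp (Nat.succ_pos j)]
      simp
    rw [htot, if_neg (Nat.succ_ne_zero j)]
    rcases le_or_gt (j + 1) α₁ with hle | hlt
    · rw [if_pos hle, Nat.add_sub_cancel]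
      rw [min_eq_left (by omega : j ≤ α₁), min_eq_left (by omega : j ≤ α₂),
        min_eq_left hle, min_eq_left (by omega : j + 1 ≤ α₂)] at hDE
      have key : (p ^ j + p ^ (j + 1)) * (p ^ j * (p - 1)) + p ^ j * p ^ j
          = p ^ (j + 1) * p ^ (j + 1) := by
        obtain ⟨m, rfl⟩ : ∃ m, p = m + 1 := ⟨p - 1, by have := hp.pos; omega⟩
        simp only [Nat.add_sub_cancel]
        ring
      omega
    · rw [if_neg (by omega)]
      rw [min_eq_right (by omega : α₁ ≤ j), min_eq_left (by omega : j ≤ α₂),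
        min_eq_right (by omega : α₁ ≤ j + 1), min_eq_left (by omega : j + 1 ≤ α₂)] at hDE
      have key : p ^ α₁ * (p ^ j * (p - 1)) + p ^ α₁ * p ^ j
          = p ^ α₁ * p ^ (j + 1) := by
        obtain ⟨m, rfl⟩ : ∃ m, p = m + 1 := ⟨p - 1, by have := hp.pos; omega⟩
        simp only [Nat.add_sub_cancel]
        ring
      omega

theorem card_cyclic_subgroups_rank_two_p_group (p α₁ α₂ : ℕ) (hp : p.Prime)
    (h1 : 1 ≤ α₁) (h12 : α₁ ≤ α₂) :
    Nat.card {H : AddSubgroup (ZMod (p ^ α₁) × ZMod (p ^ α₂)) // IsAddCyclic H} =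
      (∑ i ∈ Finset.range α₁, 2 * p ^ i) + (α₂ - α₁ + 1) * p ^ α₁ := by
  classical
  haveI : NeZero (p ^ α₁) := ⟨pow_ne_zero _ hp.ne_zero⟩
  haveI : NeZero (p ^ α₂) := ⟨pow_ne_zero _ hp.ne_zero⟩
  have hexp : ∀ g : ZMod (p ^ α₁) × ZMod (p ^ α₂), addOrderOf g ∣ p ^ α₂ := by
    intro g
    rw [Prod.addOrderOf]
    refine Nat.lcm_dvd ?_ ?_
    · exact addOrderOf_dvd_card.trans (by rw [ZMod.card]; exact pow_dvd_pow p h12)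
    · exact addOrderOf_dvd_card.trans (by rw [ZMod.card])
  rw [Nat.card_eq_fintype_card, Fintype.card_subtype]
  have hsplit : (univ.filter fun H : AddSubgroup (ZMod (p ^ α₁) × ZMod (p ^ α₂)) =>
        IsAddCyclic H)
      = (Finset.range (α₂ + 1)).biUnion (fun k =>
          univ.filter fun H : AddSubgroup (ZMod (p ^ α₁) × ZMod (p ^ α₂)) =>
            IsAddCyclic H ∧ Nat.card H = p ^ k) := by
    ext H
    simp only [Finset.mem_filter, Finset.mem_biUnion, Finset.mem_range, Finset.mem_univ,
      true_and]
    constructor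
    · intro hH
      haveI := hH
      obtain ⟨g, hg⟩ := IsAddCyclic.exists_generator (α := H)
      have hcard : Nat.card H = addOrderOf g :=
        (addOrderOf_eq_card_of_forall_mem_zmultiples hg).symm
      have hdvd : Nat.card H ∣ p ^ α₂ := by
        rw [hcard, ← AddSubgroup.addOrderOf_coe]; exact hexp _
      obtain ⟨k, hk, hke⟩ := (Nat.dvd_prime_pow hp).mp hdvd
      exact ⟨k, Nat.lt_succ_of_le hk, hH, hke⟩
    · rintro ⟨k, -, hH, -⟩; exact hH
  rw [hsplit, Finset.card_biUnion (fun a _ b _ hab => Finset.disjoint_left.mpr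
    (fun H hHa hHb => hab (Nat.pow_right_injective hp.two_le
      (((Finset.mem_filter.mp hHa).2.2.symm.trans (Finset.mem_filter.mp hHb).2.2)))))]
  rw [Finset.sum_congr rfl (fun k hk => Nval hp h12 k (by
    have := Finset.mem_range.mp hk; omega))]
  exact sumN p α₁ α₂ h1 h12
end

section
/- For a prime p and integers 1 ≤ α_1 ≤ α_2, the total number of subgroups of Z_{p^{α_1}} × Z_{p^{α_2}} equals ((α_2−α_1+1)p^{α_1+2} − (α_2−α_1−1)p^{α_1+1} − (α_1+α_2+3)p + (α_1+α_2+1))/(p−1)^2. -/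
open Finset AddSubgroup

variable {A B : Type*} [AddCommGroup A] [AddCommGroup B]

/-- The subgroup of `A × B` associated to `(C, K, f)`. -/
def graphSubgroup (C : AddSubgroup A) (K : AddSubgroup B) (f : C →+ B ⧸ K) :
    AddSubgroup (A × B) where
  carrier := {x | ∃ h : x.1 ∈ C, f ⟨x.1, h⟩ = QuotientAddGroup.mk x.2}
  zero_mem' := ⟨C.zero_mem, by simp [show (⟨0, C.zero_mem⟩ : C) = 0 from rfl]⟩
  add_mem' := by
    rintro ⟨a₁, b₁⟩ ⟨a₂, b₂⟩ ⟨h₁, e₁⟩ ⟨h₂, e₂⟩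
    refine ⟨C.add_mem h₁ h₂, ?_⟩
    simp only [Prod.fst_add, Prod.snd_add] at *
    rw [show (⟨a₁ + a₂, C.add_mem h₁ h₂⟩ : C) = ⟨a₁, h₁⟩ + ⟨a₂, h₂⟩ from rfl, map_add, e₁, e₂]
    rfl
  neg_mem' := by
    rintro ⟨a, b⟩ ⟨h, e⟩
    refine ⟨C.neg_mem h, ?_⟩
    simp only [Prod.fst_neg, Prod.snd_neg] at *
    rw [show (⟨-a, C.neg_mem h⟩ : C) = -⟨a, h⟩ from rfl, map_neg, e]
    rfl

lemma mem_graphSubgroup {C : AddSubgroup A} {K : AddSubgroup B} {f : C →+ B ⧸ K} {x : A × B} :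
    x ∈ graphSubgroup C K f ↔ ∃ h : x.1 ∈ C, f ⟨x.1, h⟩ = QuotientAddGroup.mk x.2 := Iff.rfl

lemma graphSubgroup_bijective :
    Function.Bijective
      (fun t : Σ (C : AddSubgroup A) (K : AddSubgroup B), C →+ B ⧸ K =>
        graphSubgroup t.1 t.2.1 t.2.2) := by
  constructor
  · rintro ⟨C, K, f⟩ ⟨C', K', f'⟩ h
    simp only at h
    have hC : C = C' := by
      ext x
      have key : ∀ (C : AddSubgroup A) (K : AddSubgroup B) (f : C →+ B ⧸ K),
          x ∈ C ↔ ∃ y, (x, y) ∈ graphSubgroup C K f := by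
        intro C K f
        constructor
        · intro hx
          obtain ⟨y, hy⟩ := QuotientAddGroup.mk_surjective (f ⟨x, hx⟩)
          exact ⟨y, hx, hy.symm⟩
        · rintro ⟨y, hy, -⟩
          exact hy
      rw [key C K f, key C' K' f', h]
    have hK : K = K' := by
      ext y
      have key : ∀ (C : AddSubgroup A) (K : AddSubgroup B) (f : C →+ B ⧸ K),
          y ∈ K ↔ ((0 : A), y) ∈ graphSubgroup C K f := by
        intro C K f
        constructor
        · intro hy
          refine ⟨C.zero_mem, ?_⟩
          rw [show (⟨0, C.zero_mem⟩ : C) = 0 from rfl, map_zero]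
          exact ((QuotientAddGroup.eq_zero_iff y).2 hy).symm
        · rintro ⟨h0, e⟩
          rw [show (⟨((0:A), y).1, h0⟩ : C) = 0 from Subtype.ext rfl, map_zero] at e
          exact (QuotientAddGroup.eq_zero_iff y).1 e.symm
      rw [key C K f, key C' K' f', h]
    subst hC; subst hK
    simp only [Sigma.mk.inj_iff, heq_eq_eq, true_and]
    ext x
    obtain ⟨y, hy⟩ := QuotientAddGroup.mk_surjective (f x)
    have hx : ((x : A), y) ∈ graphSubgroup C K f := ⟨x.2, by rw [Subtype.coe_eta]; exact hy.symm⟩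
    rw [h] at hx
    obtain ⟨h', e'⟩ := hx
    rw [Subtype.coe_eta] at e'
    rw [← hy]
    exact e'.symm
  · intro H
    classical
    set C : AddSubgroup A := H.map (AddMonoidHom.fst A B) with hCdef
    set K : AddSubgroup B := H.comap (AddMonoidHom.inr A B) with hKdef
    have hKmem : ∀ y : B, y ∈ K ↔ ((0 : A), y) ∈ H := fun y => Iff.rfl
    set π : H →+ C := (AddMonoidHom.fst A B).addSubgroupMap H with hπdef
    have hπ : Function.Surjective π := (AddMonoidHom.fst A B).addSubgroupMap_surjective H
    set g : H →+ B ⧸ K :=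
      (QuotientAddGroup.mk' K).comp ((AddMonoidHom.snd A B).comp H.subtype) with hgdef
    have hker : π.ker ≤ g.ker := by
      rintro ⟨⟨a, b⟩, hab⟩ h
      have ha : a = 0 := congrArg Subtype.val h
      simp only [AddMonoidHom.mem_ker, hgdef, AddMonoidHom.coe_comp, Function.comp_apply,
        QuotientAddGroup.mk'_apply] at *
      refine (QuotientAddGroup.eq_zero_iff _).2 ?_
      rw [hKmem, ← ha]
      exact hab
    set f : C →+ B ⧸ K :=
      π.liftOfRightInverse (Function.surjInv hπ) (Function.rightInverse_surjInv hπ) ⟨g, hker⟩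
      with hfdef
    have hf : ∀ x : H, f (π x) = g x := fun x =>
      π.liftOfRightInverse_comp_apply _ _ ⟨g, hker⟩ x
    refine ⟨⟨C, K, f⟩, ?_⟩
    simp only
    ext ⟨x, y⟩
    constructor
    · rintro ⟨hx, e⟩
      obtain ⟨⟨a, b⟩, hab, hax⟩ := id hx
      have hxC : x ∈ C := ⟨(a, b), hab, hax⟩
      have hπab : π ⟨(a, b), hab⟩ = ⟨x, hxC⟩ := Subtype.ext hax
      have e : f ⟨x, hxC⟩ = QuotientAddGroup.mk y := e
      have hfb : f ⟨x, hxC⟩ = QuotientAddGroup.mk b := by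
        rw [← hπab]; exact hf _
      rw [hfb] at e
      have ha : a = x := hax
      have hyb : ((0 : A), y - b) ∈ H := by
        have h2 := (QuotientAddGroup.eq (s := K)).1 e
        have h3 : y - b ∈ K := by simpa [neg_add_eq_sub] using h2
        exact (hKmem _).1 h3
      have hsplit : ((x : A), y) = ((a, b) : A × B) + (0, y - b) := by
        ext <;> simp [ha]
      rw [hsplit]
      exact H.add_mem hab hyb
    · intro hxy
      refine ⟨⟨(x, y), hxy, rfl⟩, ?_⟩
      have hπxy : π ⟨(x, y), hxy⟩ = ⟨x, ⟨(x, y), hxy, rfl⟩⟩ := Subtype.ext rfl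
      rw [← hπxy, hf]
      rfl

lemma card_zmultiples_div {n d : ℕ} (hn : n ≠ 0) (hd : d ∣ n) :
    Nat.card (zmultiples ((n / d : ℕ) : ZMod n)) = d := by
  rw [Nat.card_zmultiples, ZMod.addOrderOf_coe _ hn,
    Nat.gcd_eq_right (Nat.div_dvd_of_dvd hd), Nat.div_div_self hd hn]

lemma mul_eq_zero_iff_mem_zmultiples {n d : ℕ} (hn : n ≠ 0) (hd : d ∣ n) (x : ZMod n) :
    (d : ZMod n) * x = 0 ↔ x ∈ zmultiples ((n / d : ℕ) : ZMod n) := by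
  haveI : NeZero n := ⟨hn⟩
  have hd0 : d ≠ 0 := by rintro rfl; exact hn (zero_dvd_iff.mp hd)
  constructor
  · intro h
    have hv : ((x.val : ℕ) : ZMod n) = x := ZMod.natCast_zmod_val x
    have h2 : ((d * x.val : ℕ) : ZMod n) = 0 := by push_cast; rw [hv]; exact h
    have h3 : n ∣ d * x.val := (ZMod.natCast_eq_zero_iff _ _).1 h2
    have h4 : d * (n / d) ∣ d * x.val := by rwa [Nat.mul_div_cancel' hd]
    have h5 : (n / d) ∣ x.val := (Nat.mul_dvd_mul_iff_left (Nat.pos_of_ne_zero hd0)).1 h4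
    obtain ⟨k, hk⟩ := h5
    refine ⟨(k : ℤ), ?_⟩
    show (k : ℤ) • ((n / d : ℕ) : ZMod n) = x
    rw [zsmul_eq_mul]
    push_cast
    rw [← Nat.cast_mul, mul_comm, ← hk, hv]
  · rintro ⟨k, rfl⟩
    show (d : ZMod n) * ((k : ℤ) • ((n / d : ℕ) : ZMod n)) = 0
    rw [zsmul_eq_mul]
    push_cast
    rw [show (d : ZMod n) * (k * ((n / d : ℕ) : ZMod n)) = k * ((d * (n / d) : ℕ) : ZMod n) by
      push_cast; ring]
    rw [Nat.mul_div_cancel' hd, ZMod.natCast_self, mul_zero]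

lemma card_torsion_zmod {n : ℕ} (hn : n ≠ 0) (d : ℕ) :
    Nat.card {x : ZMod n // (d : ZMod n) * x = 0} = n.gcd d := by
  set g := n.gcd d with hg
  have hgn : g ∣ n := Nat.gcd_dvd_left n d
  have key : ∀ x : ZMod n, (d : ZMod n) * x = 0 ↔ (g : ZMod n) * x = 0 := by
    intro x
    constructor
    · intro h
      have hb := Nat.gcd_eq_gcd_ab n d
      have : (g : ZMod n) = (d : ZMod n) * ((Nat.gcdB n d : ℤ) : ZMod n) := by
        have := congrArg (fun z : ℤ => ((z : ZMod n) : ZMod n)) hb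
        push_cast at this ⊢
        rw [this, ZMod.natCast_self]
        ring
      rw [this, mul_assoc, mul_comm _ x, ← mul_assoc, h, zero_mul]
    · intro h
      have hgd : g ∣ d := Nat.gcd_dvd_right n d
      obtain ⟨c, hc⟩ := hgd
      rw [hc]
      push_cast
      rw [mul_assoc, mul_comm (c : ZMod n), ← mul_assoc, h, zero_mul]
  calc Nat.card {x : ZMod n // (d : ZMod n) * x = 0}
      = Nat.card {x : ZMod n // x ∈ zmultiples ((n / g : ℕ) : ZMod n)} := by
        refine Nat.card_congr (Equiv.subtypeEquivRight fun x => ?_)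
        rw [key x, mul_eq_zero_iff_mem_zmultiples hn hgn]
    _ = g := card_zmultiples_div hn hgn

/-- Number of homomorphisms between finite cyclic groups is the gcd of the orders. -/
lemma card_addMonoidHom_cyclic (G G' : Type*) [AddCommGroup G] [AddCommGroup G']
    [Finite G] [Finite G'] [hG : IsAddCyclic G] [hG' : IsAddCyclic G'] :
    Nat.card (G →+ G') = (Nat.card G).gcd (Nat.card G') := by
  set m := Nat.card G
  set n := Nat.card G'
  have hn : n ≠ 0 := Nat.card_pos.ne'
  let e : ZMod m ≃+ G := zmodAddCyclicAddEquiv hG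
  let e' : ZMod n ≃+ G' := zmodAddCyclicAddEquiv hG'
  have E1 : (G →+ G') ≃ (ZMod m →+ ZMod n) :=
    { toFun := fun f => (e'.symm.toAddMonoidHom.comp (f.comp e.toAddMonoidHom))
      invFun := fun f => (e'.toAddMonoidHom.comp (f.comp e.symm.toAddMonoidHom))
      left_inv := fun f => by ext x; simp
      right_inv := fun f => by ext x; simp }
  have E2 : (ZMod m →+ ZMod n) ≃ {f : ℤ →+ ZMod n // f (m : ℤ) = 0} := (ZMod.lift m).symm
  have E3 : {f : ℤ →+ ZMod n // f (m : ℤ) = 0} ≃ {x : ZMod n // (m : ZMod n) * x = 0} :=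
    (Equiv.subtypeEquiv (zmultiplesHom (ZMod n)) (fun x => by
      rw [zmultiplesHom_apply, zsmul_eq_mul]
      push_cast
      rfl)).symm
  rw [Nat.card_congr (E1.trans (E2.trans E3)), card_torsion_zmod hn m, Nat.gcd_comm]

section
variable {n : ℕ}

/-- Subgroups of `ZMod n` biject with divisors of `n`, via cardinality. -/
noncomputable def subgroupEquivDivisors (hn : n ≠ 0) :
    AddSubgroup (ZMod n) ≃ {d : ℕ // d ∈ n.divisors} where
  toFun H := ⟨Nat.card H, Nat.mem_divisors.2 ⟨by
      haveI : NeZero n := ⟨hn⟩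
      simpa [Nat.card_zmod] using AddSubgroup.card_addSubgroup_dvd_card H, hn⟩⟩
  invFun d := zmultiples ((n / d.1 : ℕ) : ZMod n)
  left_inv H := by
    haveI : NeZero n := ⟨hn⟩
    have hd : Nat.card H ∣ n := by
      simpa [Nat.card_zmod] using AddSubgroup.card_addSubgroup_dvd_card H
    refine (AddSubgroup.eq_of_le_of_card_ge ?_ ?_).symm
    · intro x hx
      rw [← mul_eq_zero_iff_mem_zmultiples hn hd x]
      have h1 : (Nat.card H) • (⟨x, hx⟩ : H) = 0 := card_nsmul_eq_zero'
      have h2 : (Nat.card H) • x = 0 := by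
        have h3 := congrArg H.subtype h1
        rwa [map_nsmul, map_zero] at h3
      rwa [nsmul_eq_mul] at h2
    · rw [card_zmultiples_div hn hd]
  right_inv d := by
    ext
    exact card_zmultiples_div hn (Nat.mem_divisors.1 d.2).1
end

lemma sum_over_subgroups_zmod {M : Type*} [AddCommMonoid M] {n : ℕ} (hn : n ≠ 0) (F : ℕ → M) :
    haveI : NeZero n := ⟨hn⟩
    ∑ H : AddSubgroup (ZMod n), F (Nat.card H) = ∑ d ∈ n.divisors, F d := by
  haveI : NeZero n := ⟨hn⟩
  let e := subgroupEquivDivisors hn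
  rw [← Finset.sum_coe_sort n.divisors F]
  refine Fintype.sum_equiv e _ _ (fun H => ?_)
  rfl

section card
-- assume previous results
variable {A B : Type*} [AddCommGroup A] [AddCommGroup B]

lemma nat_card_sigma {ι : Type*} [Fintype ι] (f : ι → Type*) [∀ i, Finite (f i)] :
    Nat.card ((i : ι) × f i) = ∑ i, Nat.card (f i) := by
  letI : ∀ i, Fintype (f i) := fun i => Fintype.ofFinite _
  simp [Nat.card_eq_fintype_card]

lemma finite_addMonoidHom (G H : Type*) [AddCommGroup G] [AddCommGroup H] [Finite G] [Finite H] :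
    Finite (G →+ H) :=
  Finite.of_injective (fun f => (f : G → H)) DFunLike.coe_injective

lemma card_subgroup_prod (A B : Type*) [AddCommGroup A] [AddCommGroup B] [Finite A] [Finite B]
    [Fintype (AddSubgroup A)] [Fintype (AddSubgroup B)] :
    Nat.card (AddSubgroup (A × B)) =
      ∑ C : AddSubgroup A, ∑ K : AddSubgroup B, Nat.card (C →+ B ⧸ K) := by
  haveI : ∀ (C : AddSubgroup A) (K : AddSubgroup B), Finite (C →+ B ⧸ K) := fun C K =>
    finite_addMonoidHom _ _
  rw [← Nat.card_eq_of_bijective _ (graphSubgroup_bijective (A := A) (B := B)), nat_card_sigma]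
  congr 1
  ext C
  rw [nat_card_sigma]
end card

noncomputable def Sq (p : ℚ) (a b : ℕ) : ℚ :=
  ∑ i ∈ range (a + 1), ∑ j ∈ range (b + 1), p ^ (min i j)

noncomputable def Fq (p : ℚ) (a b : ℕ) : ℚ :=
  (((b : ℚ) - a + 1) * p ^ (a + 2) - ((b : ℚ) - a - 1) * p ^ (a + 1)
    - ((a : ℚ) + b + 3) * p + ((a : ℚ) + b + 1)) / (p - 1) ^ 2

lemma Sq_diag {p : ℚ} (hp : p ≠ 1) (a : ℕ) : Sq p a a = Fq p a a := by
  have h1 : p - 1 ≠ 0 := sub_ne_zero.2 hp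
  induction a with
  | zero =>
      simp only [Sq, Fq, zero_add, range_one, sum_singleton, min_self, pow_zero, Nat.cast_zero]
      field_simp
      ring
  | succ a ih =>
      have hstep : Sq p (a + 1) (a + 1) =
          Sq p a a + (∑ i ∈ range (a + 1), p ^ i) + ∑ j ∈ range (a + 2), p ^ j := by
        rw [Sq, sum_range_succ]
        have hinner : ∀ i ∈ range (a + 1), ∑ j ∈ range (a + 2), p ^ (min i j)
            = (∑ j ∈ range (a + 1), p ^ (min i j)) + p ^ i := by
          intro i hi
          rw [sum_range_succ, min_eq_left (mem_range.1 hi).le]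
        rw [sum_congr rfl hinner, sum_add_distrib]
        have hlast : ∑ j ∈ range (a + 2), p ^ (min (a + 1) j) = ∑ j ∈ range (a + 2), p ^ j := by
          refine sum_congr rfl fun j hj => ?_
          rw [min_eq_right (Nat.le_of_lt_succ (mem_range.1 hj))]
        rw [hlast]
        rfl
      rw [hstep, ih, geom_sum_eq hp, geom_sum_eq hp, Fq, Fq]
      field_simp
      push_cast
      ring
lemma Sq_eq {p : ℚ} (hp : p ≠ 1) (a b : ℕ) (hab : a ≤ b) : Sq p a b = Fq p a b := by
  have h1 : p - 1 ≠ 0 := sub_ne_zero.2 hp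
  induction b, hab using Nat.le_induction with
  | base => exact Sq_diag hp a
  | succ b hab ih =>
      have hstep : Sq p a (b + 1) = Sq p a b + ∑ i ∈ range (a + 1), p ^ i := by
        rw [Sq, Sq, ← sum_add_distrib]
        refine sum_congr rfl fun i hi => ?_
        rw [sum_range_succ, min_eq_left ((Nat.le_of_lt_succ (mem_range.1 hi)).trans
          (hab.trans (Nat.le_succ b)))]
      rw [hstep, ih, geom_sum_eq hp, Fq, Fq]
      field_simp
      push_cast
      ring

lemma gcd_pow_pow (p i j : ℕ) : (p ^ i).gcd (p ^ j) = p ^ (min i j) := by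
  rcases le_total i j with h | h
  · rw [Nat.gcd_eq_left (pow_dvd_pow p h), min_eq_left h]
  · rw [Nat.gcd_eq_right (pow_dvd_pow p h), min_eq_right h]

theorem card_subgroups_rank_two_p_group (p α₁ α₂ : ℕ) (hp : p.Prime)
    (h1 : 1 ≤ α₁) (h12 : α₁ ≤ α₂) :
    (Nat.card (AddSubgroup (ZMod (p ^ α₁) × ZMod (p ^ α₂))) : ℚ) =
      (((α₂ : ℚ) - α₁ + 1) * (p : ℚ) ^ (α₁ + 2) -
        ((α₂ : ℚ) - α₁ - 1) * (p : ℚ) ^ (α₁ + 1) -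
        ((α₁ : ℚ) + α₂ + 3) * (p : ℚ) + ((α₁ : ℚ) + α₂ + 1)) / ((p : ℚ) - 1) ^ 2 := by
  have hp0 : p ≠ 0 := hp.ne_zero
  have hn₁ : (p ^ α₁ : ℕ) ≠ 0 := pow_ne_zero _ hp0
  have hn₂ : (p ^ α₂ : ℕ) ≠ 0 := pow_ne_zero _ hp0
  haveI : NeZero (p ^ α₁) := ⟨hn₁⟩
  haveI : NeZero (p ^ α₂) := ⟨hn₂⟩
  have key : Nat.card (AddSubgroup (ZMod (p ^ α₁) × ZMod (p ^ α₂))) =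
      ∑ i ∈ range (α₁ + 1), ∑ j ∈ range (α₂ + 1), p ^ (min i (α₂ - j)) := by
    rw [card_subgroup_prod]
    have step2 : ∀ (C : AddSubgroup (ZMod (p ^ α₁))) (K : AddSubgroup (ZMod (p ^ α₂))),
        Nat.card (C →+ ZMod (p ^ α₂) ⧸ K) =
          (Nat.card C).gcd (p ^ α₂ / Nat.card K) := by
      intro C K
      haveI : IsAddCyclic (ZMod (p ^ α₂) ⧸ K) :=
        isAddCyclic_of_surjective (QuotientAddGroup.mk' K) (QuotientAddGroup.mk'_surjective K)
      rw [card_addMonoidHom_cyclic]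
      congr 1
      have hmul := AddSubgroup.card_eq_card_quotient_mul_card_addSubgroup K
      rw [Nat.card_zmod] at hmul
      exact (Nat.div_eq_of_eq_mul_left Nat.card_pos hmul).symm
    simp only [step2]
    rw [sum_over_subgroups_zmod hn₁
      (fun dC => ∑ K : AddSubgroup (ZMod (p ^ α₂)), dC.gcd (p ^ α₂ / Nat.card K))]
    have inner : ∀ dC : ℕ,
        ∑ K : AddSubgroup (ZMod (p ^ α₂)), dC.gcd (p ^ α₂ / Nat.card K)
          = ∑ d₂ ∈ (p ^ α₂).divisors, dC.gcd (p ^ α₂ / d₂) :=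
      fun dC => sum_over_subgroups_zmod hn₂ (fun dK => dC.gcd (p ^ α₂ / dK))
    simp only [inner]
    rw [Nat.divisors_prime_pow hp, Finset.sum_map]
    refine sum_congr rfl fun d₁ hd₁ => ?_
    rw [Nat.divisors_prime_pow hp, Finset.sum_map]
    refine sum_congr rfl fun j hj => ?_
    simp only [Function.Embedding.coeFn_mk]
    rw [Nat.pow_div (Nat.le_of_lt_succ (mem_range.1 hj)) hp.pos, gcd_pow_pow]
  rw [key]
  have hp1 : (p : ℚ) ≠ 1 := by exact_mod_cast hp.one_lt.ne'
  push_cast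
  have reflect : ∀ i : ℕ, ∑ j ∈ range (α₂ + 1), (p : ℚ) ^ (min i (α₂ - j))
      = ∑ j ∈ range (α₂ + 1), (p : ℚ) ^ (min i j) := by
    intro i
    have := Finset.sum_range_reflect (fun j => (p : ℚ) ^ (min i j)) (α₂ + 1)
    simpa using this
  rw [Finset.sum_congr rfl fun i _ => reflect i]
  have := Sq_eq (p := (p : ℚ)) hp1 α₁ α₂ h12
  rw [Sq, Fq] at this
  rw [this]
end

section
/- For n ≥ 0, the number of cyclic subgroups of Q_8 × (Z_2)^n equals 5·2^n; in particular Q_8 × (Z_2)^n has exactly 3·2^n cyclic subgroups of order 4. -/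
open Finset

private lemma exists_zpowers_eq' {G : Type*} [Group G] (H : Subgroup G) (h : IsCyclic H) :
    ∃ x : G, Subgroup.zpowers x = H := by
  obtain ⟨g, hg⟩ := h.exists_generator
  refine ⟨g, le_antisymm (Subgroup.zpowers_le.mpr g.2) fun y hy => ?_⟩
  obtain ⟨k, hk⟩ := Subgroup.mem_zpowers_iff.mp (hg ⟨y, hy⟩)
  exact Subgroup.mem_zpowers_iff.mpr ⟨k, by simpa using congrArg Subtype.val hk⟩

private lemma isCyclic_zpowers' {G : Type*} [Group G] (g : G) : IsCyclic (Subgroup.zpowers g) :=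
  ⟨⟨⟨g, Subgroup.mem_zpowers g⟩, fun x => by
    obtain ⟨k, hk⟩ := Subgroup.mem_zpowers_iff.mp x.2
    exact ⟨k, Subtype.ext (by simpa using hk)⟩⟩⟩

private lemma fiber_card' {G : Type*} [Group G] [Fintype G] [DecidableEq G] (d : ℕ)
    [DecidablePred fun H : Subgroup G => IsCyclic H ∧ Nat.card H = d] :
    (univ.filter fun x : G => orderOf x = d).card
      = (univ.filter fun H : Subgroup G => IsCyclic H ∧ Nat.card H = d).card * d.totient := by
  classical
  rw [Finset.card_eq_sum_card_fiberwise
    (f := fun x : G => Subgroup.zpowers x)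
    (t := univ.filter fun H : Subgroup G => IsCyclic H ∧ Nat.card H = d)
    (fun x hx => by
      simp only [mem_coe, mem_filter, mem_univ, true_and] at hx ⊢
      exact ⟨isCyclic_zpowers' x, by rw [Nat.card_zpowers, hx]⟩)]
  rw [Finset.sum_congr rfl (fun H hH => ?_), Finset.sum_const, smul_eq_mul]
  simp only [mem_filter, mem_univ, true_and] at hH
  obtain ⟨hc, hcard⟩ := hH
  haveI : IsCyclic H := hc
  have key : ∀ x : G, (orderOf x = d ∧ Subgroup.zpowers x = H) ↔ (x ∈ H ∧ orderOf x = d) := by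
    intro x
    constructor
    · rintro ⟨h1, h2⟩; exact ⟨h2 ▸ Subgroup.mem_zpowers x, h1⟩
    · rintro ⟨h1, h2⟩
      refine ⟨h2, Subgroup.eq_of_le_of_card_ge (Subgroup.zpowers_le.mpr h1) ?_⟩
      rw [Nat.card_zpowers, h2, hcard]
  rw [filter_filter]
  rw [show (univ.filter fun x : G => orderOf x = d ∧ Subgroup.zpowers x = H)
      = univ.filter fun x : G => x ∈ H ∧ orderOf x = d by
    apply filter_congr; intro x _; exact key x]
  have e : {x : G // x ∈ H ∧ orderOf x = d} ≃ {y : H // orderOf y = d} :=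
    { toFun := fun x => ⟨⟨x.1, x.2.1⟩, (Subgroup.orderOf_mk _ _).trans x.2.2⟩
      invFun := fun y => ⟨y.1, y.1.2, (Subgroup.orderOf_coe _).trans y.2⟩
      left_inv := fun x => rfl
      right_inv := fun y => rfl }
  rw [← Fintype.card_subtype, Fintype.card_congr e, Fintype.card_subtype]
  have hdvd : d ∣ Fintype.card H := by rw [← Nat.card_eq_fintype_card, hcard]
  rw [IsCyclic.card_orderOf_eq_totient hdvd]

private lemma partition_cyclic' {G : Type*} [Group G] [Fintype G] [DecidableEq G]
    (h4 : ∀ x : G, x ^ 4 = 1)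
    [DecidablePred fun H : Subgroup G => IsCyclic H] :
    (univ.filter fun H : Subgroup G => IsCyclic H).card
      = ∑ d ∈ ({1, 2, 4} : Finset ℕ),
        (univ.filter fun H : Subgroup G => IsCyclic H ∧ Nat.card H = d).card := by
  classical
  rw [Finset.card_eq_sum_card_fiberwise
    (f := fun H : Subgroup G => Nat.card H) (t := ({1, 2, 4} : Finset ℕ))
    (fun H hH => by
      simp only [mem_coe, mem_filter, mem_univ, true_and] at hH
      obtain ⟨x, hx⟩ := exists_zpowers_eq' H hH
      have hdvd : Nat.card H ∣ 4 := by
        rw [← hx, Nat.card_zpowers]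
        exact orderOf_dvd_of_pow_eq_one (h4 x)
      have hmem : Nat.card H ∈ Nat.divisors 4 := Nat.mem_divisors.mpr ⟨hdvd, by norm_num⟩
      have hdiv : Nat.divisors 4 = {1, 2, 4} := by decide
      rwa [hdiv] at hmem)]
  refine Finset.sum_congr rfl fun d _ => ?_
  rw [filter_filter]

private lemma q4' : ∀ q : QuaternionGroup 2, q ^ 4 = 1 := by decide
private lemma m2' : ∀ v : Multiplicative (ZMod 2), v ^ 2 = 1 := by decide

section Specific

variable (n : ℕ)
local notation "Pn" => QuaternionGroup 2 × (Fin n → Multiplicative (ZMod 2))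

private lemma pn4' : ∀ x : Pn, x ^ 4 = 1 := by
  intro x
  refine Prod.ext (q4' x.1) (funext fun i => ?_)
  show (x.2 i) ^ 4 = 1
  calc (x.2 i) ^ 4 = ((x.2 i) ^ 2) ^ 2 := by rw [← pow_mul]
  _ = 1 := by rw [m2' (x.2 i)]; exact one_pow 2

private lemma card_pn' : Fintype.card Pn = 8 * 2 ^ n := by
  rw [Fintype.card_prod, Fintype.card_fun]
  norm_num [show Fintype.card (QuaternionGroup 2) = 8 from by decide,
    show Fintype.card (Multiplicative (ZMod 2)) = 2 from by decide]

private lemma card_sq1' :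
    (univ.filter fun x : Pn => x ^ 2 = 1).card = 2 * 2 ^ n := by
  rw [← Fintype.card_subtype]
  have e : {x : Pn // x ^ 2 = 1}
      ≃ {q : QuaternionGroup 2 // q ^ 2 = 1} × (Fin n → Multiplicative (ZMod 2)) :=
    { toFun := fun x => (⟨x.1.1, congrArg Prod.fst x.2⟩, x.1.2)
      invFun := fun y => ⟨(y.1.1, y.2), Prod.ext y.1.2 (funext fun i => m2' (y.2 i))⟩
      left_inv := fun x => rfl
      right_inv := fun y => rfl }
  rw [Fintype.card_congr e, Fintype.card_prod, Fintype.card_fun]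
  norm_num [show Fintype.card {q : QuaternionGroup 2 // q ^ 2 = 1} = 2 from by decide,
    show Fintype.card (Multiplicative (ZMod 2)) = 2 from by decide]

private lemma ord2_iff (x : Pn) : orderOf x = 2 ↔ x ^ 2 = 1 ∧ x ≠ 1 := by
  constructor
  · intro h
    refine ⟨by have := pow_orderOf_eq_one x; rwa [h] at this, fun hx => by simp [hx] at h⟩
  · rintro ⟨h1, h2⟩
    rcases Nat.prime_two.eq_one_or_self_of_dvd _ (orderOf_dvd_of_pow_eq_one h1) with h | h
    · exact absurd (orderOf_eq_one_iff.mp h) h2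
    · exact h

private lemma ord4_iff (x : Pn) : orderOf x = 4 ↔ ¬ x ^ 2 = 1 := by
  constructor
  · intro h hc
    have h2 : orderOf x ∣ 2 := orderOf_dvd_of_pow_eq_one hc
    rw [h] at h2
    norm_num at h2
  · intro h
    have hdvd : orderOf x ∣ 4 := orderOf_dvd_of_pow_eq_one (pn4' n x)
    have h1 : orderOf x ≠ 1 := fun hc => h (by rw [orderOf_eq_one_iff.mp hc]; exact one_pow 2)
    have h2 : orderOf x ≠ 2 := fun hc => h (orderOf_dvd_iff_pow_eq_one.mp (dvd_of_eq hc))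
    have hmem : orderOf x ∈ Nat.divisors 4 := Nat.mem_divisors.mpr ⟨hdvd, by norm_num⟩
    have hdiv : Nat.divisors 4 = {1, 2, 4} := by decide
    rw [hdiv, mem_insert, mem_insert, mem_singleton] at hmem
    tauto

private lemma cnt1' : (univ.filter fun x : Pn => orderOf x = 1).card = 1 := by
  have : (univ.filter fun x : Pn => orderOf x = 1) = {1} := by
    ext x; simp [orderOf_eq_one_iff]
  rw [this, card_singleton]

private lemma cnt2' : (univ.filter fun x : Pn => orderOf x = 2).card = 2 * 2 ^ n - 1 := by
  have heq : (univ.filter fun x : Pn => orderOf x = 2)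
      = (univ.filter fun x : Pn => x ^ 2 = 1).erase 1 := by
    ext x
    simp only [mem_erase, mem_filter, mem_univ, true_and, ord2_iff]
    tauto
  rw [heq, card_erase_of_mem (by simp), card_sq1']

private lemma cnt4' : (univ.filter fun x : Pn => orderOf x = 4).card = 6 * 2 ^ n := by
  have heq : (univ.filter fun x : Pn => orderOf x = 4)
      = univ.filter fun x : Pn => ¬ x ^ 2 = 1 := by
    apply filter_congr; intro x _; exact ord4_iff n x
  have hsum := Finset.card_filter_add_card_filter_not
    (s := (univ : Finset Pn)) (p := fun x => x ^ 2 = 1)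
  rw [card_univ, card_pn', card_sq1'] at hsum
  rw [heq]
  omega

end Specific

theorem card_cyclic_subgroups_quaternion_times_elementary (n : ℕ) :
    Nat.card {H : Subgroup (QuaternionGroup 2 × (Fin n → Multiplicative (ZMod 2))) //
        IsCyclic H} = 5 * 2 ^ n ∧
    Nat.card {H : Subgroup (QuaternionGroup 2 × (Fin n → Multiplicative (ZMod 2))) //
        IsCyclic H ∧ Nat.card H = 4} = 3 * 2 ^ n := by
  classical
  set G := QuaternionGroup 2 × (Fin n → Multiplicative (ZMod 2))
  have h1 := fiber_card' (G := G) 1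
  have h2 := fiber_card' (G := G) 2
  have h4 := fiber_card' (G := G) 4
  rw [cnt1' n, show Nat.totient 1 = 1 from rfl, mul_one] at h1
  rw [cnt2' n, show Nat.totient 2 = 1 from by decide, mul_one] at h2
  rw [cnt4' n, show Nat.totient 4 = 2 from by decide] at h4
  have hpow : 1 ≤ 2 ^ n := Nat.one_le_two_pow
  have hc4 : (univ.filter fun H : Subgroup G => IsCyclic H ∧ Nat.card H = 4).card
      = 3 * 2 ^ n := by omega
  have htot := partition_cyclic' (G := G) (pn4' n)
  rw [Finset.sum_insert (by norm_num), Finset.sum_insert (by norm_num),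
    Finset.sum_singleton] at htot
  constructor
  · rw [Nat.card_eq_fintype_card, Fintype.card_subtype, htot]
    omega
  · rw [Nat.card_eq_fintype_card, Fintype.card_subtype, hc4]
end

section
/- For n ≥ 3, the dihedral group D_{2^n} of order 2^n has exactly 2^{n-1} + n cyclic subgroups and 2^n + n − 1 subgroups in total; hence cdeg(D_{2^n}) = (2^{n-1}+n)/(2^n+n−1) and lim_{n→∞} cdeg(D_{2^n}) = 1/2. -/
open DihedralGroup

namespace CdegAux

variable {m : ℕ}

/-- Carrier predicate. -/
def dmem (A : AddSubgroup (ZMod m)) (c : Option (ZMod m ⧸ A)) : DihedralGroup m → Prop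
  | .r i => i ∈ A
  | .sr j => c = some ((j : ZMod m ⧸ A))

def dsub (A : AddSubgroup (ZMod m)) (c : Option (ZMod m ⧸ A)) : Subgroup (DihedralGroup m) where
  carrier := {x | dmem A c x}
  one_mem' := A.zero_mem
  mul_mem' := by
    rintro (i | i) (j | j) hi hj <;>
      simp only [Set.mem_setOf_eq, dmem, r_mul_r, r_mul_sr, sr_mul_r, sr_mul_sr] at *
    · exact A.add_mem hi hj
    · subst hj; rw [Option.some_inj]
      simp [(QuotientAddGroup.eq_zero_iff i).2 hi]
    · subst hi; rw [Option.some_inj]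
      simp [(QuotientAddGroup.eq_zero_iff j).2 hj]
    · have := (QuotientAddGroup.eq (s := A)).1 (Option.some.inj (hi.symm.trans hj))
      rwa [neg_add_eq_sub] at this
  inv_mem' := by
    have hr : ∀ i : ZMod m, (r i)⁻¹ = r (-i) := fun i =>
      inv_eq_of_mul_eq_one_right (by rw [r_mul_r, add_neg_cancel, ← one_def])
    have hs : ∀ i : ZMod m, (sr i)⁻¹ = sr i := fun i =>
      inv_eq_of_mul_eq_one_right (sr_mul_self i)
    rintro (i | i) hi
    · rw [Set.mem_setOf_eq, hr]; exact A.neg_mem hi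
    · rw [Set.mem_setOf_eq, hs]; exact hi

@[simp] lemma r_mem_dsub {A : AddSubgroup (ZMod m)} {c : Option (ZMod m ⧸ A)} {i : ZMod m} :
    r i ∈ dsub A c ↔ i ∈ A := Iff.rfl

@[simp] lemma sr_mem_dsub {A : AddSubgroup (ZMod m)} {c : Option (ZMod m ⧸ A)} {j : ZMod m} :
    sr j ∈ dsub A c ↔ c = some ((j : ZMod m ⧸ A)) := Iff.rfl

end CdegAux
namespace CdegAux
variable {m : ℕ}
open DihedralGroup

def rotSub (H : Subgroup (DihedralGroup m)) : AddSubgroup (ZMod m) where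
  carrier := {i | r i ∈ H}
  zero_mem' := by rw [Set.mem_setOf_eq, ← one_def]; exact H.one_mem
  add_mem' := fun hi hj => by
    rw [Set.mem_setOf_eq, ← r_mul_r]; exact H.mul_mem hi hj
  neg_mem' := fun {i} hi => by
    have : r (-i) = (r i)⁻¹ :=
      (inv_eq_of_mul_eq_one_right (by rw [r_mul_r, add_neg_cancel, ← one_def])).symm
    rw [Set.mem_setOf_eq, this]; exact H.inv_mem hi

theorem dsub_bijective :
    Function.Bijective (fun p : Σ A : AddSubgroup (ZMod m), Option (ZMod m ⧸ A) =>
      dsub p.1 p.2) := by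
  constructor
  · rintro ⟨A, c⟩ ⟨A', c'⟩ h
    simp only at h
    have hA : A = A' := by
      ext i
      constructor
      · intro hi; exact (r_mem_dsub).1 (h ▸ ((r_mem_dsub (c := c)).2 hi))
      · intro hi; exact (r_mem_dsub).1 (h.symm ▸ ((r_mem_dsub (c := c')).2 hi))
    subst hA
    have hc : c = c' := by
      cases c with
      | none =>
        cases c' with
        | none => rfl
        | some q =>
          obtain ⟨j, rfl⟩ := QuotientAddGroup.mk_surjective q
          have : sr j ∈ dsub A (some ((j : ZMod m ⧸ A))) := sr_mem_dsub.2 rfl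
          rw [← h] at this
          exact absurd (sr_mem_dsub.1 this) (by simp)
      | some q =>
        obtain ⟨j, rfl⟩ := QuotientAddGroup.mk_surjective q
        have : sr j ∈ dsub A (some ((j : ZMod m ⧸ A))) := sr_mem_dsub.2 rfl
        rw [h] at this
        exact (sr_mem_dsub.1 this).symm
    rw [hc]
  · intro H
    by_cases hs : ∃ j, sr j ∈ H
    · obtain ⟨j₀, hj₀⟩ := hs
      refine ⟨⟨rotSub H, some ((j₀ : ZMod m ⧸ rotSub H))⟩, ?_⟩
      ext x
      cases x with
      | r i => exact Iff.rfl
      | sr j =>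
        simp only [sr_mem_dsub, Option.some_inj]
        constructor
        · intro hj
          have h2 : -j₀ + j ∈ rotSub H := (QuotientAddGroup.eq (s := rotSub H)).1 hj
          have h3 : r (j₀ - j) ∈ H := by
            have := (rotSub H).neg_mem h2
            rwa [neg_add_rev, neg_neg, neg_add_eq_sub] at this
          have := H.mul_mem h3 hj₀
          rwa [r_mul_sr, sub_sub_cancel] at this
        · intro hj
          have h1 : sr j₀ * sr j ∈ H := H.mul_mem hj₀ hj
          rw [sr_mul_sr] at h1
          exact (QuotientAddGroup.eq (s := rotSub H)).2 (by rwa [neg_add_eq_sub])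
    · refine ⟨⟨rotSub H, none⟩, ?_⟩
      ext x
      cases x with
      | r i => exact Iff.rfl
      | sr j =>
        simp only [sr_mem_dsub]
        constructor
        · intro hj; exact absurd hj (by simp)
        · intro hj; exact absurd ⟨j, hj⟩ hs

end CdegAux
namespace CdegAux

def zsub (k : ℕ) (j : Fin (k+1)) : AddSubgroup (ZMod (2^k)) :=
  AddSubgroup.zmultiples (((2^(j:ℕ) : ℕ) : ZMod (2^k)))

lemma card_zsub (k : ℕ) (j : Fin (k+1)) : Nat.card (zsub k j) = 2^(k - (j:ℕ)) := by
  rw [zsub, Nat.card_zmultiples, ZMod.addOrderOf_coe _ (by positivity),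
    Nat.gcd_eq_right (Nat.pow_dvd_pow 2 (by omega)), Nat.pow_div (by omega) (by norm_num)]

lemma zsub_injective (k : ℕ) : Function.Injective (zsub k) := by
  intro j j' h
  have := card_zsub k j
  rw [h, card_zsub] at this
  have := Nat.pow_right_injective (le_refl 2) this
  omega

lemma mem_zsub_of_nsmul {k : ℕ} (j : Fin (k+1)) (x : ZMod (2^k))
    (hx : 2^(k - (j:ℕ)) • x = 0) : x ∈ zsub k j := by
  have hval : x = ((x.val : ℕ) : ZMod (2^k)) := (ZMod.natCast_zmod_val x).symm
  have hx2 : ((2^(k - (j:ℕ)) * x.val : ℕ) : ZMod (2^k)) = 0 := by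
    push_cast
    rw [ZMod.natCast_zmod_val]
    simpa [nsmul_eq_mul] using hx
  rw [ZMod.natCast_eq_zero_iff] at hx2
  obtain ⟨t, ht⟩ := hx2
  have h2 : (2:ℕ)^(k:ℕ) = 2^(k - (j:ℕ)) * 2^((j:ℕ)) := by
    rw [← pow_add]; congr 1; omega
  have ht2 : x.val = 2^((j:ℕ)) * t := by
    have hpos : (0:ℕ) < 2^(k-(j:ℕ)) := by positivity
    apply Nat.eq_of_mul_eq_mul_left hpos
    rw [ht, h2]; ring
  rw [hval, ht2, Nat.cast_mul]
  rw [mul_comm, ← nsmul_eq_mul]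
  exact AddSubgroup.nsmul_mem _ (AddSubgroup.mem_zmultiples _) t

lemma zsub_surjective (k : ℕ) : Function.Surjective (zsub k) := by
  intro A
  have hdvd : Nat.card A ∣ 2^k := by
    simpa using A.card_addSubgroup_dvd_card
  obtain ⟨i, hik, hcard⟩ := (Nat.dvd_prime_pow Nat.prime_two).1 hdvd
  refine ⟨⟨k - i, by omega⟩, ?_⟩
  have hle : zsub k ⟨k - i, by omega⟩ ≥ A := by
    intro x hx
    apply mem_zsub_of_nsmul
    have h1 : addOrderOf x ∣ 2^i := hcard ▸ A.addOrderOf_dvd_natCard hx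
    have : (k : ℕ) - (k - i) = i := by omega
    rw [this]
    exact addOrderOf_dvd_iff_nsmul_eq_zero.1 h1
  have hcards : Nat.card (zsub k ⟨k - i, by omega⟩) ≤ Nat.card A := by
    rw [card_zsub, hcard]
    simp only
    have : k - (k - i) = i := by omega
    rw [this]
  exact (AddSubgroup.eq_of_le_of_card_ge hle hcards).symm

noncomputable def zsubEquiv (k : ℕ) : Fin (k+1) ≃ AddSubgroup (ZMod (2^k)) :=
  Equiv.ofBijective _ ⟨zsub_injective k, zsub_surjective k⟩

lemma index_zsub (k : ℕ) (j : Fin (k+1)) : (zsub k j).index = 2^(j:ℕ) := by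
  have h := AddSubgroup.card_mul_index (zsub k j)
  rw [card_zsub] at h
  have h2 : (2:ℕ)^(k - (j:ℕ)) * 2^(j:ℕ) = Nat.card (ZMod (2^k)) := by
    rw [Nat.card_eq_fintype_card, ZMod.card, ← pow_add]
    congr 1; omega
  have hpos : (0:ℕ) < 2^(k - (j:ℕ)) := by positivity
  nlinarith [h, h2]

end CdegAux
namespace CdegAux
variable {m : ℕ}
open DihedralGroup Subgroup

/-- The rotation embedding as a monoid hom. -/
def rHom : Multiplicative (ZMod m) →* DihedralGroup m where
  toFun x := r (Multiplicative.toAdd x)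
  map_one' := one_def.symm
  map_mul' := fun x y => (r_mul_r _ _).symm

lemma isCyclic_range {G H : Type*} [Group G] [Group H] [IsCyclic G] (f : G →* H) :
    IsCyclic f.range :=
  isCyclic_of_surjective f.rangeRestrict f.rangeRestrict_surjective

lemma dsub_none_eq_range (A : AddSubgroup (ZMod m)) :
    ((rHom.comp (AddSubgroup.toSubgroup A).subtype).range : Subgroup (DihedralGroup m)) =
      dsub A none := by
  ext x
  cases x with
  | r i =>
    simp only [MonoidHom.mem_range, MonoidHom.comp_apply, r_mem_dsub]
    constructor
    · rintro ⟨⟨y, hy⟩, h⟩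
      have : Multiplicative.toAdd y = i := by
        have := h
        simp only [rHom, MonoidHom.coe_mk, OneHom.coe_mk, Subgroup.coe_subtype] at this
        exact r.inj this
      rw [← this]; exact hy
    · intro hi
      exact ⟨⟨Multiplicative.ofAdd i, hi⟩, rfl⟩
  | sr j =>
    simp only [MonoidHom.mem_range, MonoidHom.comp_apply, sr_mem_dsub]
    constructor
    · rintro ⟨y, h⟩
      simp only [rHom, MonoidHom.coe_mk, OneHom.coe_mk, Subgroup.coe_subtype] at h
      cases h
    · intro h; cases h

lemma isCyclic_dsub_none (A : AddSubgroup (ZMod m)) : IsCyclic (dsub A none) := by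
  rw [← dsub_none_eq_range]
  exact isCyclic_range _

lemma isCyclic_zpowers {G : Type*} [Group G] (g : G) : IsCyclic (Subgroup.zpowers g) := by
  have : (Subgroup.zpowers g) = (zpowersHom G g).range := by
    ext x; simp [Subgroup.mem_zpowers_iff, zpowersHom_apply]
  rw [this]
  exact isCyclic_range _

lemma dsub_bot_some (j : ZMod m) :
    dsub (⊥ : AddSubgroup (ZMod m)) (some ((j : ZMod m ⧸ (⊥ : AddSubgroup (ZMod m))))) =
      Subgroup.zpowers (sr j) := by
  apply le_antisymm
  · rintro (i | i) hx
    · have : i ∈ (⊥ : AddSubgroup (ZMod m)) := r_mem_dsub.1 hx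
      rw [AddSubgroup.mem_bot] at this
      rw [this, ← one_def]
      exact Subgroup.one_mem _
    · have := sr_mem_dsub.1 hx
      have h2 := (QuotientAddGroup.eq (s := (⊥ : AddSubgroup (ZMod m)))).1 (Option.some.inj this)
      rw [AddSubgroup.mem_bot, neg_add_eq_zero] at h2
      rw [← h2]
      exact Subgroup.mem_zpowers _
  · rw [Subgroup.zpowers_le]
    exact sr_mem_dsub.2 rfl

lemma sr_zpow (t : ZMod m) (n : ℤ) : (sr t)^n = 1 ∨ (sr t)^n = sr t := by
  have h2 : (sr t)^(2:ℤ) = 1 := by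
    rw [zpow_two, sr_mul_self]
  rcases Int.even_or_odd n with ⟨q, hq⟩ | ⟨q, hq⟩
  · left; rw [hq, ← two_mul, zpow_mul, h2, one_zpow]
  · right; rw [hq, zpow_add, zpow_mul, h2, one_zpow, one_mul, zpow_one]

lemma r_zpow_form (t : ZMod m) (n : ℤ) : ∃ u, (r t)^n = r u := by
  have : r t = rHom (Multiplicative.ofAdd t) := rfl
  rw [this, ← map_zpow]
  exact ⟨_, rfl⟩

lemma not_isCyclic_dsub_some (A : AddSubgroup (ZMod m)) (hA : A ≠ ⊥)
    (c : ZMod m ⧸ A) : ¬ IsCyclic (dsub A (some c)) := by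
  intro hcyc
  obtain ⟨g, hg⟩ := hcyc.exists_generator
  obtain ⟨j, rfl⟩ := QuotientAddGroup.mk_surjective c
  obtain ⟨a, haA, ha0⟩ : ∃ a ∈ A, a ≠ 0 := by
    by_contra h
    push_neg at h
    exact hA (by ext x; simp only [AddSubgroup.mem_bot]; exact ⟨fun hx => h x hx, fun hx => hx ▸ A.zero_mem⟩)
  have hra : r a ∈ dsub A (some ((j : ZMod m ⧸ A))) := r_mem_dsub.2 haA
  have hsj : sr j ∈ dsub A (some ((j : ZMod m ⧸ A))) := sr_mem_dsub.2 rfl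
  obtain ⟨n1, hn1⟩ := hg ⟨r a, hra⟩
  obtain ⟨n2, hn2⟩ := hg ⟨sr j, hsj⟩
  have hn1' : ((g : DihedralGroup m))^n1 = r a := by
    have := congrArg (Subtype.val) hn1
    simpa using this
  have hn2' : ((g : DihedralGroup m))^n2 = sr j := by
    have := congrArg (Subtype.val) hn2
    simpa using this
  cases hgval : (g : DihedralGroup m) with
  | r t =>
    rw [hgval] at hn2'
    obtain ⟨u, hu⟩ := r_zpow_form t n2
    rw [hu] at hn2'
    cases hn2'
  | sr t =>
    rw [hgval] at hn1'
    rcases sr_zpow t n1 with h | h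
    · rw [h, one_def] at hn1'
      exact ha0 (r.inj hn1'.symm)
    · rw [h] at hn1'
      cases hn1'
end CdegAux
namespace CdegAux
open DihedralGroup

instance optionFinite {α : Type*} [Finite α] : Finite (Option α) := by
  haveI := Fintype.ofFinite α
  infer_instance

lemma nat_card_sigma {ι : Type*} [Fintype ι] (f : ι → Type*) [∀ i, Finite (f i)] :
    Nat.card (Σ i, f i) = ∑ i, Nat.card (f i) := by
  haveI := fun i => Fintype.ofFinite (f i)
  simp [Nat.card_eq_fintype_card, Fintype.card_sigma]

lemma sum_two_pow (n : ℕ) : ∑ i ∈ Finset.range n, 2^i = 2^n - 1 := by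
  induction n with
  | zero => simp
  | succ n ih =>
    rw [Finset.sum_range_succ, ih, pow_succ]
    have : 1 ≤ 2^n := Nat.one_le_two_pow
    omega

/-- Subtype of a sigma type. -/
def sigmaSubtypeEquiv {ι : Type*} (f : ι → Type*) (p : ∀ i, f i → Prop) :
    {x : Σ i, f i // p x.1 x.2} ≃ Σ i, {y : f i // p i y} where
  toFun x := ⟨x.1.1, x.1.2, x.2⟩
  invFun x := ⟨⟨x.1, x.2.1⟩, x.2.2⟩
  left_inv := fun ⟨⟨i, y⟩, h⟩ => rfl
  right_inv := fun ⟨i, y, h⟩ => rfl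

noncomputable def dihedralSubgroupEquiv (m : ℕ) :
    (Σ A : AddSubgroup (ZMod m), Option (ZMod m ⧸ A)) ≃ Subgroup (DihedralGroup m) :=
  Equiv.ofBijective _ dsub_bijective

lemma card_quot (m : ℕ) (A : AddSubgroup (ZMod m)) : Nat.card (ZMod m ⧸ A) = A.index := rfl

theorem total_count (k : ℕ) : Nat.card (Subgroup (DihedralGroup (2^k))) = 2^(k+1) + k := by
  haveI : NeZero (2^k) := ⟨by positivity⟩
  rw [← Nat.card_congr (dihedralSubgroupEquiv (2^k))]
  haveI := Fintype.ofFinite (AddSubgroup (ZMod (2^k)))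
  rw [nat_card_sigma]
  rw [← Equiv.sum_comp (zsubEquiv k) (fun A => Nat.card (Option (ZMod (2^k) ⧸ A)))]
  have hterm : ∀ j : Fin (k+1),
      Nat.card (Option (ZMod (2^k) ⧸ zsubEquiv k j)) = 2^(j:ℕ) + 1 := by
    intro j
    have : zsubEquiv k j = zsub k j := rfl
    rw [this, Finite.card_option, card_quot, index_zsub]
  rw [Finset.sum_congr rfl (fun j _ => hterm j)]
  rw [Fin.sum_univ_eq_sum_range (fun i => 2^i + 1), Finset.sum_add_distrib, sum_two_pow]
  simp only [Finset.sum_const, Finset.card_range, smul_eq_mul, mul_one]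
  have : 1 ≤ 2^(k+1) := Nat.one_le_two_pow
  omega

lemma isCyclic_dsub_iff {m : ℕ} (A : AddSubgroup (ZMod m)) (c : Option (ZMod m ⧸ A)) :
    IsCyclic (dsub A c) ↔ (c = none ∨ A = ⊥) := by
  cases c with
  | none => simpa using isCyclic_dsub_none A
  | some q =>
    simp only [reduceCtorEq, false_or]
    constructor
    · intro h
      by_contra hA
      exact not_isCyclic_dsub_some A hA q h
    · rintro rfl
      obtain ⟨j, rfl⟩ := QuotientAddGroup.mk_surjective q
      rw [dsub_bot_some]
      exact isCyclic_zpowers _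
lemma card_opt_subtype_bot (k : ℕ) :
    Nat.card {c : Option (ZMod (2^k) ⧸ (⊥ : AddSubgroup (ZMod (2^k)))) //
      c = none ∨ (⊥ : AddSubgroup (ZMod (2^k))) = ⊥} = 2^k + 1 := by
  haveI : NeZero (2^k) := ⟨by positivity⟩
  rw [Nat.card_congr (Equiv.subtypeUnivEquiv (fun c => Or.inr rfl)),
    Finite.card_option, card_quot, AddSubgroup.index_bot, Nat.card_eq_fintype_card, ZMod.card]

lemma card_opt_subtype_ne (k : ℕ) (A : AddSubgroup (ZMod (2^k))) (hA : A ≠ ⊥) :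
    Nat.card {c : Option (ZMod (2^k) ⧸ A) // c = none ∨ A = ⊥} = 1 := by
  haveI : Unique {c : Option (ZMod (2^k) ⧸ A) // c = none ∨ A = ⊥} := {
    default := ⟨none, Or.inl rfl⟩
    uniq := by
      rintro ⟨c, hc⟩
      rcases hc with rfl | h
      · rfl
      · exact absurd h hA }
  exact Nat.card_unique

lemma zsub_last (k : ℕ) : zsub k (Fin.last k) = ⊥ := by
  rw [zsub]
  have : (((2^k : ℕ) : ZMod (2^k))) = 0 := by
    rw [ZMod.natCast_self]
  simp [Fin.last, this]

theorem cyclic_count (k : ℕ) :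
    Nat.card {H : Subgroup (DihedralGroup (2^k)) // IsCyclic H} = 2^k + k + 1 := by
  haveI : NeZero (2^k) := ⟨by positivity⟩
  have e1 : {p : Σ A : AddSubgroup (ZMod (2^k)), Option (ZMod (2^k) ⧸ A) //
      IsCyclic (dsub p.1 p.2)} ≃ {H : Subgroup (DihedralGroup (2^k)) // IsCyclic H} :=
    Equiv.subtypeEquiv (dihedralSubgroupEquiv (2^k)) (fun p => Iff.rfl)
  rw [← Nat.card_congr e1]
  have e2 : {p : Σ A : AddSubgroup (ZMod (2^k)), Option (ZMod (2^k) ⧸ A) //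
      IsCyclic (dsub p.1 p.2)} ≃ {p : Σ A : AddSubgroup (ZMod (2^k)), Option (ZMod (2^k) ⧸ A) //
      p.2 = none ∨ p.1 = ⊥} :=
    Equiv.subtypeEquivRight (fun p => isCyclic_dsub_iff p.1 p.2)
  rw [Nat.card_congr e2,
    Nat.card_congr (sigmaSubtypeEquiv (fun A : AddSubgroup (ZMod (2^k)) =>
      Option (ZMod (2^k) ⧸ A)) (fun A c => c = none ∨ A = ⊥))]
  haveI := Fintype.ofFinite (AddSubgroup (ZMod (2^k)))
  rw [nat_card_sigma]
  rw [← Equiv.sum_comp (zsubEquiv k)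
    (fun A => Nat.card {c : Option (ZMod (2^k) ⧸ A) // c = none ∨ A = ⊥})]
  have hterm : ∀ j : Fin (k+1),
      Nat.card {c : Option (ZMod (2^k) ⧸ zsubEquiv k j) //
        c = none ∨ zsubEquiv k j = ⊥} = if j = Fin.last k then 2^k + 1 else 1 := by
    intro j
    have hz : zsubEquiv k j = zsub k j := rfl
    by_cases hj : j = Fin.last k
    · subst hj
      rw [if_pos rfl, hz]
      have hb := zsub_last k
      rw [hb]
      exact card_opt_subtype_bot k
    · rw [if_neg hj, hz]
      apply card_opt_subtype_ne
      intro hb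
      exact hj (zsub_injective k (hb.trans (zsub_last k).symm))
  rw [Finset.sum_congr rfl (fun j _ => hterm j)]
  have : ∀ j : Fin (k+1), (if j = Fin.last k then 2^k + 1 else 1) =
      1 + (if j = Fin.last k then 2^k else 0) := by
    intro j; split <;> omega
  rw [Finset.sum_congr rfl (fun j _ => this j), Finset.sum_add_distrib,
    Finset.sum_ite_eq' Finset.univ (Fin.last k) (fun _ => 2^k)]
  simp only [Finset.sum_const, Finset.card_univ, Fintype.card_fin, smul_eq_mul, mul_one,
    Finset.mem_univ, if_true]
  omega

end CdegAux
open CdegAux Filter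

theorem cdeg_dihedral_two_power :
    (∀ n : ℕ, 3 ≤ n →
      Nat.card {H : Subgroup (DihedralGroup (2 ^ (n - 1))) // IsCyclic H} = 2 ^ (n - 1) + n ∧
      Nat.card (Subgroup (DihedralGroup (2 ^ (n - 1)))) = 2 ^ n + n - 1 ∧
      cdeg (DihedralGroup (2 ^ (n - 1))) =
        ((2 ^ (n - 1) + n : ℕ) : ℚ) / ((2 ^ n + n - 1 : ℕ) : ℚ)) ∧
    Filter.Tendsto (fun n : ℕ => cdeg (DihedralGroup (2 ^ (n - 1))))
      Filter.atTop (nhds (1 / 2)) := by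
  have key : ∀ n : ℕ, 3 ≤ n →
      Nat.card {H : Subgroup (DihedralGroup (2 ^ (n - 1))) // IsCyclic H} = 2 ^ (n - 1) + n ∧
      Nat.card (Subgroup (DihedralGroup (2 ^ (n - 1)))) = 2 ^ n + n - 1 ∧
      cdeg (DihedralGroup (2 ^ (n - 1))) =
        ((2 ^ (n - 1) + n : ℕ) : ℚ) / ((2 ^ n + n - 1 : ℕ) : ℚ) := by
    intro n hn
    have hc : Nat.card {H : Subgroup (DihedralGroup (2 ^ (n - 1))) // IsCyclic H} =
        2 ^ (n - 1) + n := by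
      rw [cyclic_count (n - 1)]
      generalize (2 : ℕ) ^ (n - 1) = a
      omega
    have ht : Nat.card (Subgroup (DihedralGroup (2 ^ (n - 1)))) = 2 ^ n + n - 1 := by
      rw [total_count (n - 1), show n - 1 + 1 = n from by omega]
      generalize (2 : ℕ) ^ n = a
      omega
    exact ⟨hc, ht, by rw [cdeg, hc, ht]⟩
  refine ⟨key, ?_⟩
  rw [Rat.isUniformEmbedding_coe_real.isEmbedding.tendsto_nhds_iff]
  have hcast : ((1 / 2 : ℚ) : ℝ) = 1 / 2 := by push_cast; ring
  rw [hcast]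
  have hEq : (fun n : ℕ => (1:ℝ) / 2 + ((n : ℝ) + 1) / (2 * ((2 : ℝ) ^ n + n - 1)))
      =ᶠ[atTop] (((↑) : ℚ → ℝ) ∘ fun n : ℕ => cdeg (DihedralGroup (2 ^ (n - 1)))) := by
    filter_upwards [eventually_ge_atTop 3] with n hn
    obtain ⟨-, -, hq⟩ := key n hn
    have h1 : (1 : ℕ) ≤ 2 ^ n + n := by
      have := Nat.one_le_two_pow (n := n); omega
    have hnR : (3 : ℝ) ≤ (n : ℝ) := by exact_mod_cast hn
    have hpow : (1 : ℝ) ≤ (2 : ℝ) ^ (n - 1) := one_le_pow₀ (by norm_num)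
    have h2 : (2 : ℝ) ^ n = 2 * 2 ^ (n - 1) := by
      rw [← pow_succ']
      congr 1
      omega
    have hd : 2 * (2 : ℝ) ^ (n - 1) + (n : ℝ) - 1 ≠ 0 := by nlinarith
    simp only [Function.comp_apply, hq]
    push_cast [Nat.cast_sub h1]
    rw [h2]
    field_simp
    ring
  refine Tendsto.congr' hEq ?_
  have h0 : Tendsto (fun n : ℕ => ((n : ℝ) + 1) / (2 * ((2 : ℝ) ^ n + n - 1)))
      atTop (nhds 0) := by
    have ha := tendsto_self_mul_const_pow_of_lt_one (r := (1:ℝ)/2) (by norm_num) (by norm_num)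
    have hb := tendsto_pow_atTop_nhds_zero_of_lt_one (r := (1:ℝ)/2) (by norm_num) (by norm_num)
    have hup : Tendsto (fun n : ℕ => ((n : ℝ) + 1) * ((1:ℝ)/2) ^ n) atTop (nhds 0) := by
      have := ha.add hb
      simp only [add_zero] at this
      refine this.congr fun n => ?_
      ring
    refine tendsto_of_tendsto_of_tendsto_of_le_of_le' tendsto_const_nhds hup ?_ ?_
    · filter_upwards [eventually_ge_atTop 1] with n hn
      have hpow : (1 : ℝ) ≤ (2 : ℝ) ^ n := one_le_pow₀ (by norm_num)
      have hnR : (1 : ℝ) ≤ (n : ℝ) := by exact_mod_cast hn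
      apply div_nonneg <;> nlinarith
    · filter_upwards [eventually_ge_atTop 1] with n hn
      have hpow : (1 : ℝ) ≤ (2 : ℝ) ^ n := one_le_pow₀ (by norm_num)
      have hnR : (1 : ℝ) ≤ (n : ℝ) := by exact_mod_cast hn
      have hrw : ((n : ℝ) + 1) * ((1:ℝ)/2) ^ n = ((n : ℝ) + 1) / 2 ^ n := by
        rw [div_pow, one_pow]; rw [mul_one_div]
      rw [hrw]
      apply div_le_div_of_nonneg_left (by nlinarith) (by positivity)
      nlinarith
  have := (tendsto_const_nhds (x := (1:ℝ)/2) (f := atTop (α := ℕ))).add h0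
  simpa using this
end
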